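/- arXiv:1701.08417 — 4 statements merged into one kernel-verified Lean document; each statement's English description precedes it below -/
import Mathlib

section
/- Every bψ-perfect graph is perfect; that is, if for every induced subgraph H of G the b-chromatic number of H equals the pseudoachromatic number of H, then for every induced subgraph H of G the chromatic number of H equals the clique number of H. -/
open SimpleGraph

/-- A `k`-coloring `c` of `G` is *complete* if it is surjective and for every pair of distinct
colors there is an edge of `G` whose endpoints receive those two colors. -/
def IsCompleteColoring {V : Type*} (G : SimpleGraph V) {k : ℕ} (c : V → Fin k) : Prop :=
  Function.Surjective c ∧
    ∀ i j : Fin k, i ≠ j → ∃ u v : V, G.Adj u v ∧ c u = i ∧ c v = j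

/-- A coloring is *proper* if adjacent vertices receive distinct colors. -/
def IsProperColoring {V : Type*} (G : SimpleGraph V) {k : ℕ} (c : V → Fin k) : Prop :=
  ∀ u v : V, G.Adj u v → c u ≠ c v

/-- A `k`-coloring `c` of `G` is *dominating* if it is surjective and every color class contains
a vertex having a neighbor in every other color class. -/
def IsDominatingColoring {V : Type*} (G : SimpleGraph V) {k : ℕ} (c : V → Fin k) : Prop :=
  Function.Surjective c ∧
    ∀ i : Fin k, ∃ v : V, c v = i ∧ ∀ j : Fin k, j ≠ i → ∃ u : V, G.Adj v u ∧ c u = j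

/-- A `k`-coloring `c` of `G` is *pseudo-Grundy* if it is surjective and every vertex is
adjacent to at least one vertex of each smaller color. -/
def IsPseudoGrundyColoring {V : Type*} (G : SimpleGraph V) {k : ℕ} (c : V → Fin k) : Prop :=
  Function.Surjective c ∧
    ∀ v : V, ∀ j : Fin k, j < c v → ∃ u : V, G.Adj v u ∧ c u = j

/-- The pseudoachromatic number `ψ(G)`: the largest `k` admitting a complete `k`-coloring. -/
noncomputable def pseudoachromaticNumber {V : Type*} (G : SimpleGraph V) : ℕ :=
  sSup {k | ∃ c : V → Fin k, IsCompleteColoring G c}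

/-- The achromatic number `α(G)`: the largest `k` admitting a proper complete `k`-coloring. -/
noncomputable def achromaticNumber {V : Type*} (G : SimpleGraph V) : ℕ :=
  sSup {k | ∃ c : V → Fin k, IsProperColoring G c ∧ IsCompleteColoring G c}

/-- The b-chromatic number `b(G)`: the largest `k` admitting a proper dominating `k`-coloring. -/
noncomputable def bChromaticNumber {V : Type*} (G : SimpleGraph V) : ℕ :=
  sSup {k | ∃ c : V → Fin k, IsProperColoring G c ∧ IsDominatingColoring G c}

/-- The pseudo-b-chromatic number `B(G)`: the largest `k` admitting a dominating `k`-coloring. -/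
noncomputable def pseudoBChromaticNumber {V : Type*} (G : SimpleGraph V) : ℕ :=
  sSup {k | ∃ c : V → Fin k, IsDominatingColoring G c}

/-- The Grundy number `Γ(G)`: the largest `k` admitting a proper pseudo-Grundy `k`-coloring. -/
noncomputable def grundyNumber {V : Type*} (G : SimpleGraph V) : ℕ :=
  sSup {k | ∃ c : V → Fin k, IsProperColoring G c ∧ IsPseudoGrundyColoring G c}

/-- The pseudo-Grundy number `γ(G)`: the largest `k` admitting a pseudo-Grundy `k`-coloring. -/
noncomputable def pseudoGrundyNumber {V : Type*} (G : SimpleGraph V) : ℕ :=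
  sSup {k | ∃ c : V → Fin k, IsPseudoGrundyColoring G c}

/-- `G` contains the complete graph `K_k` as a minor: there are `k` pairwise disjoint
"branch sets", each inducing a connected (nonempty) subgraph, with an edge of `G` between
every two of them. -/
def HasCompleteMinor {V : Type*} (G : SimpleGraph V) (k : ℕ) : Prop :=
  ∃ B : Fin k → Set V,
    (∀ i, (G.induce (B i)).Connected) ∧
    (∀ i j : Fin k, i ≠ j → Disjoint (B i) (B j)) ∧
    (∀ i j : Fin k, i ≠ j → ∃ u ∈ B i, ∃ v ∈ B j, G.Adj u v)

/-- The Hadwiger number `h(G)`: the largest `k` such that `K_k` is a minor of `G`. -/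
noncomputable def hadwigerNumber {V : Type*} (G : SimpleGraph V) : ℕ :=
  sSup {k | HasCompleteMinor G k}

/-- `G` has an induced subgraph isomorphic to `H`. -/
def HasInducedCopy {V : Type*} {W : Type*} (G : SimpleGraph V) (H : SimpleGraph W) : Prop :=
  ∃ s : Set V, Nonempty (G.induce s ≃g H)

/-- A graph is *chordal* if it has no induced cycle on four or more vertices. -/
def IsChordal {V : Type*} (G : SimpleGraph V) : Prop :=
  ∀ n : ℕ, 4 ≤ n → ¬ HasInducedCopy G (cycleGraph n)

/-- The diamond graph `D`: `K₄` minus one edge. -/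
def diamondGraph : SimpleGraph (Fin 4) :=
  (⊤ : SimpleGraph (Fin 4)).deleteEdges {s(0, 1)}

universe u

private lemma three_in_two' {α : Type*} {x y u1 u2 u3 : α}
    (h1 : u1 = x ∨ u1 = y) (h2 : u2 = x ∨ u2 = y) (h3 : u3 = x ∨ u3 = y)
    (n12 : u1 ≠ u2) (n13 : u1 ≠ u3) (n23 : u2 ≠ u3) : False := by
  rcases h1 with rfl|rfl <;> rcases h2 with h|h <;> rcases h3 with h'|h' <;> simp_all

private lemma bdd_complete {V : Type*} [Finite V] (G : SimpleGraph V) :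
    BddAbove {k | ∃ c : V → Fin k, IsCompleteColoring G c} := by
  refine ⟨Nat.card V, fun k hk => ?_⟩
  obtain ⟨c, hc, -⟩ := hk
  simpa using Nat.card_le_card_of_surjective c hc

private lemma no_P4 {V : Type*} [Fintype V] (G : SimpleGraph V)
    (h : ∀ s : Set V, bChromaticNumber (G.induce s) = pseudoachromaticNumber (G.induce s))
    {a b c d : V} (hab : G.Adj a b) (hbc : G.Adj b c) (hcd : G.Adj c d)
    (hac : ¬ G.Adj a c) (had : ¬ G.Adj a d) (hbd : ¬ G.Adj b d) : False := by
  classical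
  have nab : a ≠ b := hab.ne
  have nbc : b ≠ c := hbc.ne
  have ncd : c ≠ d := hcd.ne
  have nac : a ≠ c := fun e => had (by rw [e]; exact hcd)
  have nad : a ≠ d := fun e => hac (by rw [e]; exact hcd.symm)
  have nbd : b ≠ d := fun e => had (by rw [← e]; exact hab)
  set t : Set V := {a, b, c, d} with ht
  have ha : a ∈ t := by simp [ht]
  have hb : b ∈ t := by simp [ht]
  have hc : c ∈ t := by simp [ht]
  have hd : d ∈ t := by simp [ht]
  have hmem : ∀ x : ↥t, x.1 = a ∨ x.1 = b ∨ x.1 = c ∨ x.1 = d := by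
    intro x
    have := x.2
    simp only [ht, Set.mem_insert_iff, Set.mem_singleton_iff] at this
    tauto
  have adjT : ∀ {x y : V} (hx : x ∈ t) (hy : y ∈ t), G.Adj x y →
      (G.induce t).Adj ⟨x, hx⟩ ⟨y, hy⟩ := by
    intro x y hx hy hxy; simpa using hxy
  -- ψ ≥ 3
  have hmemS : 3 ∈ {k | ∃ c' : ↥t → Fin k, IsCompleteColoring (G.induce t) c'} := by
    set c0 : ↥t → Fin 3 :=
      (fun x => if x.1 = a then 0 else if x.1 = b then 1 else if x.1 = c then 2 else 0)
      with hc0def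
    have eA : c0 ⟨a, ha⟩ = 0 := by simp [hc0def]
    have eB : c0 ⟨b, hb⟩ = 1 := by simp [hc0def, Ne.symm nab]
    have eC : c0 ⟨c, hc⟩ = 2 := by simp [hc0def, Ne.symm nac, Ne.symm nbc]
    have eD : c0 ⟨d, hd⟩ = 0 := by simp [hc0def, Ne.symm nad, Ne.symm nbd, Ne.symm ncd]
    refine ⟨c0, ?_, ?_⟩
    · intro y
      fin_cases y
      · exact ⟨_, eA⟩
      · exact ⟨_, eB⟩
      · exact ⟨_, eC⟩
    · intro i j hij
      fin_cases i <;> fin_cases j <;>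
        first
          | exact absurd rfl hij
          | exact ⟨_, _, adjT ha hb hab, eA, eB⟩
          | exact ⟨_, _, adjT hb ha hab.symm, eB, eA⟩
          | exact ⟨_, _, adjT hb hc hbc, eB, eC⟩
          | exact ⟨_, _, adjT hc hb hbc.symm, eC, eB⟩
          | exact ⟨_, _, adjT hd hc hcd.symm, eD, eC⟩
          | exact ⟨_, _, adjT hc hd hcd, eC, eD⟩
  have hψ : 3 ≤ pseudoachromaticNumber (G.induce t) := le_csSup (bdd_complete _) hmemS
  -- b ≤ 2
  have hb2 : bChromaticNumber (G.induce t) ≤ 2 := by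
    apply csSup_le'
    rintro k ⟨cc, hprop, hsurj, hdom⟩
    by_contra hk
    push_neg at hk
    have h3 : 3 ≤ k := hk
    have nbrA : ∀ u : ↥t, G.Adj a u.1 → u.1 = b := by
      intro u hu
      rcases hmem u with e|e|e|e
      · rw [e] at hu; exact absurd hu (G.loopless.irrefl a)
      · exact e
      · rw [e] at hu; exact absurd hu hac
      · rw [e] at hu; exact absurd hu had
    have nbrD : ∀ u : ↥t, G.Adj d u.1 → u.1 = c := by
      intro u hu
      rcases hmem u with e|e|e|e
      · rw [e] at hu; exact absurd hu.symm had
      · rw [e] at hu; exact absurd hu.symm hbd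
      · exact e
      · rw [e] at hu; exact absurd hu (G.loopless.irrefl d)
    have vloc : ∀ v : ↥t, (∀ j, j ≠ cc v → ∃ u, (G.induce t).Adj v u ∧ cc u = j) →
        v.1 = b ∨ v.1 = c := by
      intro v hv
      obtain ⟨j1, j2, h12, h1, h2⟩ : ∃ j1 j2 : Fin k, j1 ≠ j2 ∧ j1 ≠ cc v ∧ j2 ≠ cc v := by
        set i0 : Fin k := ⟨0, by omega⟩ with hi0
        set i1 : Fin k := ⟨1, by omega⟩ with hi1
        set i2 : Fin k := ⟨2, by omega⟩ with hi2
        have d01 : i0 ≠ i1 := by simp [hi0, hi1, Fin.ext_iff]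
        have d02 : i0 ≠ i2 := by simp [hi0, hi2, Fin.ext_iff]
        have d12 : i1 ≠ i2 := by simp [hi1, hi2, Fin.ext_iff]
        by_cases e0 : cc v = i0
        · exact ⟨i1, i2, d12, by rw [e0]; exact d01.symm, by rw [e0]; exact d02.symm⟩
        · by_cases e1 : cc v = i1
          · exact ⟨i0, i2, d02, by rw [e1]; exact d01, by rw [e1]; exact d12.symm⟩
          · exact ⟨i0, i1, d01, fun e => e0 e.symm, fun e => e1 e.symm⟩
      obtain ⟨u1, a1, e1⟩ := hv j1 h1
      obtain ⟨u2, a2, e2⟩ := hv j2 h2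
      have hu : u1 ≠ u2 := fun e => h12 (by rw [← e1, e, e2])
      have a1' : G.Adj v.1 u1.1 := by simpa using a1
      have a2' : G.Adj v.1 u2.1 := by simpa using a2
      rcases hmem v with e|e|e|e
      · exfalso; rw [e] at a1' a2'
        exact hu (Subtype.ext ((nbrA u1 a1').trans (nbrA u2 a2').symm))
      · exact Or.inl e
      · exact Or.inr e
      · exfalso; rw [e] at a1' a2'
        exact hu (Subtype.ext ((nbrD u1 a1').trans (nbrD u2 a2').symm))
    set i0 : Fin k := ⟨0, by omega⟩ with hi0
    set i1 : Fin k := ⟨1, by omega⟩ with hi1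
    set i2 : Fin k := ⟨2, by omega⟩ with hi2
    obtain ⟨v0, hc0, hd0⟩ := hdom i0
    obtain ⟨v1, hc1, hd1⟩ := hdom i1
    obtain ⟨v2, hc2, hd2⟩ := hdom i2
    have w0 := vloc v0 (fun j hj => hd0 j (by rwa [hc0] at hj))
    have w1 := vloc v1 (fun j hj => hd1 j (by rwa [hc1] at hj))
    have w2 := vloc v2 (fun j hj => hd2 j (by rwa [hc2] at hj))
    have d01 : i0 ≠ i1 := by simp [hi0, hi1, Fin.ext_iff]
    have d02 : i0 ≠ i2 := by simp [hi0, hi2, Fin.ext_iff]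
    have d12 : i1 ≠ i2 := by simp [hi1, hi2, Fin.ext_iff]
    have n01 : v0.1 ≠ v1.1 := fun e => d01 (by rw [← hc0, Subtype.ext e, hc1])
    have n02 : v0.1 ≠ v2.1 := fun e => d02 (by rw [← hc0, Subtype.ext e, hc2])
    have n12 : v1.1 ≠ v2.1 := fun e => d12 (by rw [← hc1, Subtype.ext e, hc2])
    exact three_in_two' w0 w1 w2 n01 n02 n12
  rw [← h t] at hψ
  omega

private lemma no_C4 {V : Type*} [Fintype V] (G : SimpleGraph V)
    (h : ∀ s : Set V, bChromaticNumber (G.induce s) = pseudoachromaticNumber (G.induce s))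
    {a b c d : V} (nac : a ≠ c) (nbd : b ≠ d)
    (hab : G.Adj a b) (hbc : G.Adj b c) (hcd : G.Adj c d) (hda : G.Adj d a)
    (hac : ¬ G.Adj a c) (hbd : ¬ G.Adj b d) : False := by
  classical
  have nab : a ≠ b := hab.ne
  have nbc : b ≠ c := hbc.ne
  have ncd : c ≠ d := hcd.ne
  have nad : a ≠ d := hda.ne'
  set t : Set V := {a, b, c, d} with ht
  have ha : a ∈ t := by simp [ht]
  have hb : b ∈ t := by simp [ht]
  have hc : c ∈ t := by simp [ht]
  have hd : d ∈ t := by simp [ht]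
  have hmem : ∀ x : ↥t, x.1 = a ∨ x.1 = b ∨ x.1 = c ∨ x.1 = d := by
    intro x
    have := x.2
    simp only [ht, Set.mem_insert_iff, Set.mem_singleton_iff] at this
    tauto
  have adjT : ∀ {x y : V} (hx : x ∈ t) (hy : y ∈ t), G.Adj x y →
      (G.induce t).Adj ⟨x, hx⟩ ⟨y, hy⟩ := by
    intro x y hx hy hxy; simpa using hxy
  -- ψ ≥ 3
  have hmemS : 3 ∈ {k | ∃ c' : ↥t → Fin k, IsCompleteColoring (G.induce t) c'} := by
    set c0 : ↥t → Fin 3 :=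
      (fun x => if x.1 = a then 0 else if x.1 = b then 1 else 2)
      with hc0def
    have eA : c0 ⟨a, ha⟩ = 0 := by simp [hc0def]
    have eB : c0 ⟨b, hb⟩ = 1 := by simp [hc0def, Ne.symm nab]
    have eC : c0 ⟨c, hc⟩ = 2 := by simp [hc0def, Ne.symm nac, Ne.symm nbc]
    have eD : c0 ⟨d, hd⟩ = 2 := by simp [hc0def, Ne.symm nad, Ne.symm nbd]
    refine ⟨c0, ?_, ?_⟩
    · intro y
      fin_cases y
      · exact ⟨_, eA⟩
      · exact ⟨_, eB⟩
      · exact ⟨_, eC⟩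
    · intro i j hij
      fin_cases i <;> fin_cases j <;>
        first
          | exact absurd rfl hij
          | exact ⟨_, _, adjT ha hb hab, eA, eB⟩
          | exact ⟨_, _, adjT hb ha hab.symm, eB, eA⟩
          | exact ⟨_, _, adjT hb hc hbc, eB, eC⟩
          | exact ⟨_, _, adjT hc hb hbc.symm, eC, eB⟩
          | exact ⟨_, _, adjT ha hd hda.symm, eA, eD⟩
          | exact ⟨_, _, adjT hd ha hda, eD, eA⟩
  have hψ : 3 ≤ pseudoachromaticNumber (G.induce t) := le_csSup (bdd_complete _) hmemS
  -- b ≤ 2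
  have hb2 : bChromaticNumber (G.induce t) ≤ 2 := by
    apply csSup_le'
    rintro k ⟨cc, hprop, hsurj, hdom⟩
    by_contra hk
    push_neg at hk
    have h3 : 3 ≤ k := hk
    -- neighbor descriptions
    have nbrA : ∀ u : ↥t, G.Adj a u.1 → u.1 = b ∨ u.1 = d := by
      intro u hu
      rcases hmem u with e|e|e|e
      · rw [e] at hu; exact absurd hu (G.loopless.irrefl a)
      · exact Or.inl e
      · rw [e] at hu; exact absurd hu hac
      · exact Or.inr e
    have nbrB : ∀ u : ↥t, G.Adj b u.1 → u.1 = a ∨ u.1 = c := by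
      intro u hu
      rcases hmem u with e|e|e|e
      · exact Or.inl e
      · rw [e] at hu; exact absurd hu (G.loopless.irrefl b)
      · exact Or.inr e
      · rw [e] at hu; exact absurd hu hbd
    have nbrC : ∀ u : ↥t, G.Adj c u.1 → u.1 = b ∨ u.1 = d := by
      intro u hu
      rcases hmem u with e|e|e|e
      · rw [e] at hu; exact absurd hu.symm hac
      · exact Or.inl e
      · rw [e] at hu; exact absurd hu (G.loopless.irrefl c)
      · exact Or.inr e
    have nbrD : ∀ u : ↥t, G.Adj d u.1 → u.1 = a ∨ u.1 = c := by
      intro u hu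
      rcases hmem u with e|e|e|e
      · exact Or.inl e
      · rw [e] at hu; exact absurd hu.symm hbd
      · exact Or.inr e
      · rw [e] at hu; exact absurd hu (G.loopless.irrefl d)
    -- step 1 : k = 3
    have hk3 : k = 3 := by
      by_contra hk4
      have h4 : 4 ≤ k := by omega
      set i0 : Fin k := ⟨0, by omega⟩ with hi0
      set i1 : Fin k := ⟨1, by omega⟩ with hi1
      set i2 : Fin k := ⟨2, by omega⟩ with hi2
      set i3 : Fin k := ⟨3, by omega⟩ with hi3
      obtain ⟨v0, hc0, hd0⟩ := hdom i0
      have d1 : i1 ≠ i0 := by simp [hi1, hi0, Fin.ext_iff]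
      have d2 : i2 ≠ i0 := by simp [hi2, hi0, Fin.ext_iff]
      have d3 : i3 ≠ i0 := by simp [hi3, hi0, Fin.ext_iff]
      obtain ⟨u1, a1, e1⟩ := hd0 i1 d1
      obtain ⟨u2, a2, e2⟩ := hd0 i2 d2
      obtain ⟨u3, a3, e3⟩ := hd0 i3 d3
      have n12 : u1 ≠ u2 := fun e => (by simp [hi1, hi2, Fin.ext_iff] : i1 ≠ i2)
        (by rw [← e1, e, e2])
      have n13 : u1 ≠ u3 := fun e => (by simp [hi1, hi3, Fin.ext_iff] : i1 ≠ i3)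
        (by rw [← e1, e, e3])
      have n23 : u2 ≠ u3 := fun e => (by simp [hi2, hi3, Fin.ext_iff] : i2 ≠ i3)
        (by rw [← e2, e, e3])
      have n12' : u1.1 ≠ u2.1 := fun e => n12 (Subtype.ext e)
      have n13' : u1.1 ≠ u3.1 := fun e => n13 (Subtype.ext e)
      have n23' : u2.1 ≠ u3.1 := fun e => n23 (Subtype.ext e)
      have a1' : G.Adj v0.1 u1.1 := by simpa using a1
      have a2' : G.Adj v0.1 u2.1 := by simpa using a2
      have a3' : G.Adj v0.1 u3.1 := by simpa using a3
      rcases hmem v0 with e|e|e|e <;> rw [e] at a1' a2' a3'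
      · exact three_in_two' (nbrA u1 a1') (nbrA u2 a2') (nbrA u3 a3') n12' n13' n23'
      · exact three_in_two' (nbrB u1 a1') (nbrB u2 a2') (nbrB u3 a3') n12' n13' n23'
      · exact three_in_two' (nbrC u1 a1') (nbrC u2 a2') (nbrC u3 a3') n12' n13' n23'
      · exact three_in_two' (nbrD u1 a1') (nbrD u2 a2') (nbrD u3 a3') n12' n13' n23'
    subst hk3
    -- now k = 3
    have pAB : cc ⟨a, ha⟩ ≠ cc ⟨b, hb⟩ := hprop _ _ (adjT ha hb hab)
    have pBC : cc ⟨b, hb⟩ ≠ cc ⟨c, hc⟩ := hprop _ _ (adjT hb hc hbc)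
    have pCD : cc ⟨c, hc⟩ ≠ cc ⟨d, hd⟩ := hprop _ _ (adjT hc hd hcd)
    have pDA : cc ⟨d, hd⟩ ≠ cc ⟨a, ha⟩ := hprop _ _ (adjT hd ha hda)
    have colors_cover : ∀ u : ↥t, cc u = cc ⟨a, ha⟩ ∨ cc u = cc ⟨b, hb⟩ ∨
        cc u = cc ⟨c, hc⟩ ∨ cc u = cc ⟨d, hd⟩ := by
      intro u
      rcases hmem u with e|e|e|e
      · exact Or.inl (congrArg cc (Subtype.ext e))
      · exact Or.inr (Or.inl (congrArg cc (Subtype.ext e)))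
      · exact Or.inr (Or.inr (Or.inl (congrArg cc (Subtype.ext e))))
      · exact Or.inr (Or.inr (Or.inr (congrArg cc (Subtype.ext e))))
    have hp : cc ⟨a, ha⟩ = cc ⟨c, hc⟩ ∨ cc ⟨b, hb⟩ = cc ⟨d, hd⟩ :=
      (by decide : ∀ w x y z : Fin 3, w ≠ x → x ≠ y → y ≠ z → z ≠ w → w = y ∨ x = z)
        _ _ _ _ pAB pBC pCD pDA
    have third : ∀ x y : Fin 3, ∃ z, z ≠ x ∧ z ≠ y := by decide
    by_cases hAC : cc ⟨a, ha⟩ = cc ⟨c, hc⟩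
    · by_cases hBD : cc ⟨b, hb⟩ = cc ⟨d, hd⟩
      · -- surjectivity contradiction
        obtain ⟨z, hz1, hz2⟩ := third (cc ⟨a, ha⟩) (cc ⟨b, hb⟩)
        obtain ⟨u, hu⟩ := hsurj z
        rcases colors_cover u with e|e|e|e
        · exact hz1 (hu ▸ e)
        · exact hz2 (hu ▸ e)
        · exact hz1 (hu ▸ (e.trans hAC.symm))
        · exact hz2 (hu ▸ (e.trans hBD.symm))
      · -- B is the unique vertex colored cc B
        obtain ⟨v, hv, hvdom⟩ := hdom (cc ⟨b, hb⟩)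
        have hvB : v = ⟨b, hb⟩ := by
          rcases hmem v with e|e|e|e
          · exact absurd ((congrArg cc (Subtype.ext e)).symm.trans hv) pAB
          · exact Subtype.ext e
          · exact absurd (hAC.trans ((congrArg cc (Subtype.ext e)).symm.trans hv)) pAB
          · exact absurd ((congrArg cc (Subtype.ext e)).symm.trans hv).symm
              (fun e' => hBD e')
        subst hvB
        obtain ⟨u, hadj, hcu⟩ := hvdom (cc ⟨d, hd⟩) (fun e => hBD e.symm)
        have hadj' : G.Adj b u.1 := by simpa using hadj
        rcases nbrB u hadj' with e|e
        · have : cc u = cc ⟨a, ha⟩ := congrArg cc (Subtype.ext e)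
          exact pDA (hcu.symm.trans this)
        · have : cc u = cc ⟨c, hc⟩ := congrArg cc (Subtype.ext e)
          exact pCD (this.symm.trans hcu)
    · have hBD : cc ⟨b, hb⟩ = cc ⟨d, hd⟩ := hp.resolve_left hAC
      -- A is the unique vertex colored cc A
      obtain ⟨v, hv, hvdom⟩ := hdom (cc ⟨a, ha⟩)
      have hvA : v = ⟨a, ha⟩ := by
        rcases hmem v with e|e|e|e
        · exact Subtype.ext e
        · exact absurd ((congrArg cc (Subtype.ext e)).symm.trans hv).symm pAB
        · exact absurd ((congrArg cc (Subtype.ext e)).symm.trans hv).symm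
            (fun e' => hAC e')
        · exact absurd ((congrArg cc (Subtype.ext e)).symm.trans hv) pDA
      subst hvA
      obtain ⟨u, hadj, hcu⟩ := hvdom (cc ⟨c, hc⟩) (fun e => hAC e.symm)
      have hadj' : G.Adj a u.1 := by simpa using hadj
      rcases nbrA u hadj' with e|e
      · have : cc u = cc ⟨b, hb⟩ := congrArg cc (Subtype.ext e)
        exact pBC (this.symm.trans hcu)
      · have : cc u = cc ⟨d, hd⟩ := congrArg cc (Subtype.ext e)
        exact pCD (this.symm.trans hcu).symm
  rw [← h t] at hψ
  omega

private lemma cliqueNum_le_of_embedding {α β : Type*} [Fintype α] [Fintype β]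
    {A : SimpleGraph α} {B : SimpleGraph β} (f : A ↪g B) : A.cliqueNum ≤ B.cliqueNum := by
  classical
  obtain ⟨s, hs⟩ := A.exists_isNClique_cliqueNum
  have h1 : B.IsClique (s.image f) := by
    intro x hx y hy hne
    simp only [Finset.coe_image, Set.mem_image, Finset.mem_coe] at hx hy
    obtain ⟨x', hx', rfl⟩ := hx
    obtain ⟨y', hy', rfl⟩ := hy
    exact f.map_rel_iff.2 (hs.1 hx' hy' (fun e => hne (congrArg f e)))
  have h2 : (s.image f).card = A.cliqueNum := by
    rw [Finset.card_image_of_injective _ f.injective, hs.2]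
  calc A.cliqueNum = (s.image f).card := h2.symm
    _ ≤ B.cliqueNum := IsClique.card_le_cliqueNum (tc := h1)

private lemma colorable_cliqueNum : ∀ (n : ℕ) {W : Type u} [Fintype W] (H : SimpleGraph W),
    Fintype.card W ≤ n →
    (∀ a b c d : W, H.Adj a b → H.Adj b c → H.Adj c d →
      ¬H.Adj a c → ¬H.Adj a d → ¬H.Adj b d → False) →
    (∀ a b c d : W, a ≠ c → b ≠ d → H.Adj a b → H.Adj b c → H.Adj c d → H.Adj d a →
      ¬H.Adj a c → ¬H.Adj b d → False) →
    H.Colorable H.cliqueNum := by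
  intro n
  induction n with
  | zero =>
    intro W _ H hcard _ _
    have : IsEmpty W := by rw [← Fintype.card_eq_zero_iff]; omega
    exact SimpleGraph.Colorable.of_isEmpty (G := H) _
  | succ n ih =>
    intro W _ H hcard hP4 hC4
    classical
    by_cases hW : IsEmpty W
    · exact SimpleGraph.Colorable.of_isEmpty (G := H) _
    have : Nonempty W := not_isEmpty_iff.mp hW
    set deg : W → ℕ := fun w => (Finset.univ.filter (H.Adj w ·)).card with hdeg
    obtain ⟨v0, -, hv⟩ := Finset.exists_min_image Finset.univ deg
      ⟨Classical.arbitrary W, Finset.mem_univ _⟩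
    set K : Finset W := Finset.univ.filter (H.Adj v0 ·) with hK
    have hvK : v0 ∉ K := by simp [hK]
    have memK : ∀ {x}, x ∈ K ↔ H.Adj v0 x := by intro x; simp [hK]
    -- K ∪ {v} is a clique
    have hKadj : ∀ x ∈ K, ∀ y ∈ K, x ≠ y → H.Adj x y := by
      intro x hx y hy hne
      by_contra hxy
      have hsub : ∀ z : W, H.Adj x z → z = v0 ∨ H.Adj v0 z := by
        intro z hz
        by_contra hcon
        push_neg at hcon
        obtain ⟨hzv, hvz⟩ := hcon
        have hyz_ne : y ≠ z := fun e => hxy (e ▸ hz)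
        have hyv : H.Adj y v0 := (memK.1 hy).symm
        have hvx : H.Adj v0 x := memK.1 hx
        have hyx : ¬H.Adj y x := fun e => hxy e.symm
        by_cases hyz : H.Adj y z
        · exact hC4 y v0 x z (Ne.symm hne) (Ne.symm hzv) hyv hvx hz hyz.symm hyx hvz
        · exact hP4 y v0 x z hyv hvx hz hyx hyz hvz
      -- degree contradiction
      have hKx : Finset.univ.filter (H.Adj x ·) ⊆ ((insert v0 K).erase y).erase x := by
        intro z hz
        simp only [Finset.mem_filter, Finset.mem_univ, true_and] at hz
        have hzx : z ≠ x := fun e => H.loopless.irrefl x (e ▸ hz)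
        have hzy : z ≠ y := fun e => hxy (e ▸ hz)
        rcases hsub z hz with rfl | hvz
        · have hzy' : z ≠ y := hzy
          simp only [Finset.mem_erase]
          exact ⟨hzx, hzy, Finset.mem_insert_self _ _⟩
        · simp only [Finset.mem_erase]
          exact ⟨hzx, hzy, Finset.mem_insert_of_mem (memK.2 hvz)⟩
      have hyins : y ∈ insert v0 K := Finset.mem_insert_of_mem hy
      have hxins : x ∈ (insert v0 K).erase y := Finset.mem_erase.2 ⟨hne, Finset.mem_insert_of_mem hx⟩
      have hcards : (((insert v0 K).erase y).erase x).card = K.card - 1 := by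
        rw [Finset.card_erase_of_mem hxins, Finset.card_erase_of_mem hyins,
          Finset.card_insert_of_notMem hvK]
        omega
      have h1 : deg x ≤ K.card - 1 := by
        have := Finset.card_le_card hKx
        rw [hcards] at this
        exact this
      have h2 : deg v0 ≤ deg x := hv x (Finset.mem_univ x)
      have h3 : deg v0 = K.card := rfl
      have h4 : 1 ≤ K.card := Finset.card_pos.2 ⟨x, hx⟩
      omega
    have hKclique : H.IsClique (insert v0 K : Finset W) := by
      intro x hx y hy hne
      simp only [Finset.coe_insert, Set.mem_insert_iff, Finset.mem_coe] at hx hy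
      rcases hx with rfl | hx
      · rcases hy with rfl | hy
        · exact absurd rfl hne
        · exact memK.1 hy
      · rcases hy with rfl | hy
        · exact (memK.1 hx).symm
        · exact hKadj x hx y hy hne
    have hω : K.card + 1 ≤ H.cliqueNum := by
      have hcardins : (insert v0 K).card = K.card + 1 := Finset.card_insert_of_notMem hvK
      have := IsClique.card_le_cliqueNum (tc := hKclique)
      omega
    -- induction on the subgraph without v
    set s' : Set W := {w | w ≠ v0} with hs'
    have hcard' : Fintype.card ↥s' ≤ n := by
      have hlt : Fintype.card ↥s' < Fintype.card W :=
        Fintype.card_subtype_lt (x := v0) (by simp [hs'])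
      omega
    have adj' : ∀ x y : ↥s', (H.induce s').Adj x y ↔ H.Adj x.1 y.1 := by
      intro x y; simp
    have hP4' : ∀ a b c d : ↥s', (H.induce s').Adj a b → (H.induce s').Adj b c →
        (H.induce s').Adj c d → ¬(H.induce s').Adj a c → ¬(H.induce s').Adj a d →
        ¬(H.induce s').Adj b d → False := by
      intro a b c d h1 h2 h3 h4 h5 h6
      exact hP4 a b c d ((adj' _ _).1 h1) ((adj' _ _).1 h2) ((adj' _ _).1 h3)
        (fun e => h4 ((adj' _ _).2 e)) (fun e => h5 ((adj' _ _).2 e))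
        (fun e => h6 ((adj' _ _).2 e))
    have hC4' : ∀ a b c d : ↥s', a ≠ c → b ≠ d → (H.induce s').Adj a b →
        (H.induce s').Adj b c → (H.induce s').Adj c d → (H.induce s').Adj d a →
        ¬(H.induce s').Adj a c → ¬(H.induce s').Adj b d → False := by
      intro a b c d n1 n2 h1 h2 h3 h4 h5 h6
      exact hC4 a b c d (fun e => n1 (Subtype.ext e)) (fun e => n2 (Subtype.ext e))
        ((adj' _ _).1 h1) ((adj' _ _).1 h2) ((adj' _ _).1 h3) ((adj' _ _).1 h4)
        (fun e => h5 ((adj' _ _).2 e)) (fun e => h6 ((adj' _ _).2 e))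
    have hcol' := ih (H.induce s') hcard' hP4' hC4'
    have hle : (H.induce s').cliqueNum ≤ H.cliqueNum :=
      cliqueNum_le_of_embedding (Embedding.induce s')
    obtain ⟨C'⟩ := hcol'.mono hle
    set N := H.cliqueNum with hN
    set T : Finset (Fin N) := K.attach.image
      (fun x => C' ⟨x.1, (memK.1 x.2).ne'⟩) with hT
    have hTcard : T.card < N := by
      have h1 : T.card ≤ K.card := by
        calc T.card ≤ K.attach.card := Finset.card_image_le
          _ = K.card := Finset.card_attach
      omega
    have hfree : ∃ i0 : Fin N, i0 ∉ T := by
      by_contra hcon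
      push_neg at hcon
      have : T = Finset.univ := Finset.eq_univ_iff_forall.2 hcon
      rw [this, Finset.card_univ, Fintype.card_fin] at hTcard
      omega
    obtain ⟨i0, hi0⟩ := hfree
    refine ⟨Coloring.mk (fun w => if h : w = v0 then i0 else C' ⟨w, h⟩) ?_⟩
    intro p q hpq
    by_cases hp : p = v0 <;> by_cases hq : q = v0
    · exact absurd hpq (by rw [hp, hq]; exact H.loopless.irrefl v0)
    · simp only [dif_pos hp, dif_neg hq]
      intro e
      apply hi0
      rw [e]
      exact Finset.mem_image.2 ⟨⟨q, memK.2 (by rw [← hp]; exact hpq)⟩, Finset.mem_attach _ _, rfl⟩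
    · simp only [dif_pos hq, dif_neg hp]
      intro e
      apply hi0
      rw [← e]
      exact Finset.mem_image.2 ⟨⟨p, memK.2 (by rw [← hq]; exact hpq.symm)⟩, Finset.mem_attach _ _, rfl⟩
    · simp only [dif_neg hp, dif_neg hq]
      exact C'.valid ((adj' ⟨p, hp⟩ ⟨q, hq⟩).2 hpq)

/-- Every bψ-perfect graph is perfect. -/
theorem b_pseudoachromatic_perfect_is_perfect {V : Type*} [Fintype V] (G : SimpleGraph V)
    (h : ∀ s : Set V, bChromaticNumber (G.induce s) = pseudoachromaticNumber (G.induce s)) :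
    ∀ s : Set V, (G.induce s).chromaticNumber = ((G.induce s).cliqueNum : ℕ∞) := by
  intro s
  classical
  have hfin : Fintype ↥s := Fintype.ofFinite _
  have adj' : ∀ x y : ↥s, (G.induce s).Adj x y ↔ G.Adj x.1 y.1 := by
    intro x y; simp
  have hP4 : ∀ a b c d : ↥s, (G.induce s).Adj a b → (G.induce s).Adj b c →
      (G.induce s).Adj c d → ¬(G.induce s).Adj a c → ¬(G.induce s).Adj a d →
      ¬(G.induce s).Adj b d → False := by
    intro a b c d h1 h2 h3 h4 h5 h6
    exact no_P4 G h ((adj' _ _).1 h1) ((adj' _ _).1 h2) ((adj' _ _).1 h3)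
      (fun e => h4 ((adj' _ _).2 e)) (fun e => h5 ((adj' _ _).2 e))
      (fun e => h6 ((adj' _ _).2 e))
  have hC4 : ∀ a b c d : ↥s, a ≠ c → b ≠ d → (G.induce s).Adj a b →
      (G.induce s).Adj b c → (G.induce s).Adj c d → (G.induce s).Adj d a →
      ¬(G.induce s).Adj a c → ¬(G.induce s).Adj b d → False := by
    intro a b c d n1 n2 h1 h2 h3 h4 h5 h6
    exact no_C4 G h (fun e => n1 (Subtype.ext e)) (fun e => n2 (Subtype.ext e))
      ((adj' _ _).1 h1) ((adj' _ _).1 h2) ((adj' _ _).1 h3) ((adj' _ _).1 h4)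
      (fun e => h5 ((adj' _ _).2 e)) (fun e => h6 ((adj' _ _).2 e))
  have hcol := colorable_cliqueNum (Fintype.card ↥s) (G.induce s) le_rfl hP4 hC4
  apply le_antisymm
  · exact hcol.chromaticNumber_le
  · obtain ⟨tt, htt⟩ := (G.induce s).exists_isNClique_cliqueNum
    have hcard := htt.1.card_le_chromaticNumber
    rw [htt.2] at hcard
    exact hcard
end

section
/- Every Bψ-perfect graph is perfect; that is, if for every induced subgraph H of G the pseudo-b-chromatic number of H equals the pseudoachromatic number of H, then for every induced subgraph H of G the chromatic number of H equals the clique number of H. -/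
open SimpleGraph

/- ## Auxiliary material -/

set_option maxRecDepth 20000

section ConcreteGraphs

/-- Adjacency relation of a concrete path `P₄`. -/
def p4rel (i j : Fin 4) : Prop :=
  (i=0∧j=1)∨(i=1∧j=0)∨(i=1∧j=2)∨(i=2∧j=1)∨(i=2∧j=3)∨(i=3∧j=2)

/-- Adjacency relation of a concrete cycle `C₄`. -/
def c4rel (i j : Fin 4) : Prop :=
  (i=0∧j=1)∨(i=1∧j=0)∨(i=1∧j=2)∨(i=2∧j=1)∨(i=2∧j=3)∨(i=3∧j=2)∨(i=3∧j=0)∨(i=0∧j=3)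

instance : DecidableRel p4rel := fun i j => by unfold p4rel; infer_instance
instance : DecidableRel c4rel := fun i j => by unfold c4rel; infer_instance

/-- A concrete path `P₄`. -/
def P4c : SimpleGraph (Fin 4) where
  Adj := p4rel
  symm := ⟨fun i j h => by revert h; exact (by decide : ∀ i j : Fin 4, p4rel i j → p4rel j i) i j⟩
  loopless := ⟨fun i => (by decide : ∀ i : Fin 4, ¬ p4rel i i) i⟩

/-- A concrete cycle `C₄`. -/
def C4c : SimpleGraph (Fin 4) where
  Adj := c4rel
  symm := ⟨fun i j h => by revert h; exact (by decide : ∀ i j : Fin 4, c4rel i j → c4rel j i) i j⟩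
  loopless := ⟨fun i => (by decide : ∀ i : Fin 4, ¬ c4rel i i) i⟩

instance : DecidableRel P4c.Adj := fun i j => by show Decidable (p4rel i j); infer_instance
instance : DecidableRel C4c.Adj := fun i j => by show Decidable (c4rel i j); infer_instance

instance {V : Type*} [Fintype V] [DecidableEq V] (G : SimpleGraph V) [DecidableRel G.Adj]
    {k : ℕ} (c : V → Fin k) : Decidable (IsDominatingColoring G c) := by
  unfold IsDominatingColoring; infer_instance

instance {V : Type*} [Fintype V] [DecidableEq V] (G : SimpleGraph V) [DecidableRel G.Adj]
    {k : ℕ} (c : V → Fin k) : Decidable (IsCompleteColoring G c) := by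
  unfold IsCompleteColoring; infer_instance

lemma p4_complete3 : ∃ c : Fin 4 → Fin 3, IsCompleteColoring P4c c :=
  ⟨![0,1,2,0], by decide⟩
lemma p4_noDom3 : ∀ c : Fin 4 → Fin 3, ¬ IsDominatingColoring P4c c := by decide
lemma p4_noDom4 : ∀ c : Fin 4 → Fin 4, ¬ IsDominatingColoring P4c c := by decide
lemma c4_complete3 : ∃ c : Fin 4 → Fin 3, IsCompleteColoring C4c c :=
  ⟨![0,1,2,0], by decide⟩
lemma c4_noDom3 : ∀ c : Fin 4 → Fin 3, ¬ IsDominatingColoring C4c c := by decide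
lemma c4_noDom4 : ∀ c : Fin 4 → Fin 4, ¬ IsDominatingColoring C4c c := by decide

end ConcreteGraphs

section Transfer

lemma exists_dominating_of_iso {V W : Type*} {G : SimpleGraph V} {H : SimpleGraph W}
    (e : G ≃g H) {k : ℕ} :
    (∃ c : V → Fin k, IsDominatingColoring G c) → ∃ c : W → Fin k, IsDominatingColoring H c := by
  rintro ⟨c, hs, hd⟩
  refine ⟨c ∘ e.symm, hs.comp e.symm.surjective, ?_⟩
  intro i
  obtain ⟨v, hv, hdom⟩ := hd i
  refine ⟨e v, by simpa using hv, ?_⟩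
  intro j hj
  obtain ⟨u, hu, hcu⟩ := hdom j hj
  refine ⟨e u, ?_, by simpa using hcu⟩
  have : H.Adj (e v) (e u) ↔ G.Adj v u := e.map_adj_iff
  exact this.mpr hu

lemma exists_complete_of_iso {V W : Type*} {G : SimpleGraph V} {H : SimpleGraph W}
    (e : G ≃g H) {k : ℕ} :
    (∃ c : V → Fin k, IsCompleteColoring G c) → ∃ c : W → Fin k, IsCompleteColoring H c := by
  rintro ⟨c, hs, hcom⟩
  refine ⟨c ∘ e.symm, hs.comp e.symm.surjective, ?_⟩
  intro i j hij
  obtain ⟨u, v, huv, hu, hv⟩ := hcom i j hij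
  refine ⟨e u, e v, ?_, by simpa using hu, by simpa using hv⟩
  have : H.Adj (e u) (e v) ↔ G.Adj u v := e.map_adj_iff
  exact this.mpr huv

lemma B_ne_psi_of_iso {V : Type*} {G : SimpleGraph V} {K : SimpleGraph (Fin 4)} (e : G ≃g K)
    (hpsi : ∃ c : Fin 4 → Fin 3, IsCompleteColoring K c)
    (h3 : ∀ c : Fin 4 → Fin 3, ¬ IsDominatingColoring K c)
    (h4 : ∀ c : Fin 4 → Fin 4, ¬ IsDominatingColoring K c) :
    pseudoBChromaticNumber G ≠ pseudoachromaticNumber G := by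
  haveI : Fintype V := Fintype.ofEquiv (Fin 4) e.toEquiv.symm
  have hcard : Fintype.card V = 4 := by
    rw [← Fintype.card_fin 4]; exact Fintype.card_congr e.toEquiv
  have hbound : ∀ k : ℕ, (∃ c : V → Fin k, Function.Surjective c) → k ≤ 4 := by
    rintro k ⟨c, hc⟩
    have := Fintype.card_le_of_surjective c hc
    simpa [hcard] using this
  have h1 : 3 ≤ pseudoachromaticNumber G := by
    apply le_csSup ⟨4, fun k hk => hbound k ⟨hk.choose, hk.choose_spec.1⟩⟩
    exact exists_complete_of_iso e.symm hpsi
  have h2 : pseudoBChromaticNumber G ≤ 2 := by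
    apply csSup_le
    · refine ⟨1, fun _ => (0 : Fin 1), fun i => ⟨e.symm 0, Subsingleton.elim _ _⟩, ?_⟩
      intro i
      exact ⟨e.symm 0, Subsingleton.elim _ _, fun j hj => absurd (Subsingleton.elim j i) hj⟩
    · rintro k ⟨c, hc⟩
      by_contra hk
      push_neg at hk
      have hk4 : k ≤ 4 := hbound k ⟨c, hc.1⟩
      interval_cases k
      · obtain ⟨c', hc'⟩ := exists_dominating_of_iso e ⟨c, hc⟩
        exact h3 c' hc'
      · obtain ⟨c', hc'⟩ := exists_dominating_of_iso e ⟨c, hc⟩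
        exact h4 c' hc'
  omega

lemma induced_p4_iso {V : Type*} (G : SimpleGraph V) (a b c d : V)
    (hab : G.Adj a b) (hbc : G.Adj b c) (hcd : G.Adj c d)
    (hac : ¬G.Adj a c) (had : ¬G.Adj a d) (hbd : ¬G.Adj b d) :
    Nonempty (P4c ≃g G.induce ({a, b, c, d} : Set V)) := by
  have nab : a ≠ b := hab.ne
  have nbc : b ≠ c := hbc.ne
  have ncd : c ≠ d := hcd.ne
  have nac : a ≠ c := fun h => had (by rw [h]; exact hcd)
  have nad : a ≠ d := fun h => hac (by rw [h]; exact hcd.symm)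
  have nbd : b ≠ d := fun h => had (by rw [← h]; exact hab)
  have hca : ¬G.Adj c a := fun h => hac h.symm
  have hda : ¬G.Adj d a := fun h => had h.symm
  have hdb : ¬G.Adj d b := fun h => hbd h.symm
  let f : Fin 4 → ({a, b, c, d} : Set V) :=
    ![⟨a, by simp⟩, ⟨b, by simp⟩, ⟨c, by simp⟩, ⟨d, by simp⟩]
  have hinj : Function.Injective f := by
    intro i j hij
    have hval := congrArg Subtype.val hij
    fin_cases i <;> fin_cases j <;> simp_all [f]
  have hsurj : Function.Surjective f := by
    rintro ⟨x, hx⟩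
    simp only [Set.mem_insert_iff, Set.mem_singleton_iff] at hx
    rcases hx with rfl | rfl | rfl | rfl
    · exact ⟨0, rfl⟩
    · exact ⟨1, rfl⟩
    · exact ⟨2, rfl⟩
    · exact ⟨3, rfl⟩
  refine ⟨⟨Equiv.ofBijective f ⟨hinj, hsurj⟩, ?_⟩⟩
  intro i j
  show (G.induce ({a, b, c, d} : Set V)).Adj (f i) (f j) ↔ p4rel i j
  fin_cases i <;> fin_cases j <;>
    simp [f, p4rel, comap_adj, hab, hbc, hcd, hac, had, hbd,
      hab.symm, hbc.symm, hcd.symm, hca, hda, hdb]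

lemma induced_c4_iso {V : Type*} (G : SimpleGraph V) (a b c d : V)
    (nac : a ≠ c) (nbd : b ≠ d)
    (hab : G.Adj a b) (hbc : G.Adj b c) (hcd : G.Adj c d) (hda : G.Adj d a)
    (hac : ¬G.Adj a c) (hbd : ¬G.Adj b d) :
    Nonempty (C4c ≃g G.induce ({a, b, c, d} : Set V)) := by
  have nab : a ≠ b := hab.ne
  have nbc : b ≠ c := hbc.ne
  have ncd : c ≠ d := hcd.ne
  have nad : a ≠ d := fun h => hda.ne h.symm
  have hca : ¬G.Adj c a := fun h => hac h.symm
  have hdb : ¬G.Adj d b := fun h => hbd h.symm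
  let f : Fin 4 → ({a, b, c, d} : Set V) :=
    ![⟨a, by simp⟩, ⟨b, by simp⟩, ⟨c, by simp⟩, ⟨d, by simp⟩]
  have hinj : Function.Injective f := by
    intro i j hij
    have hval := congrArg Subtype.val hij
    fin_cases i <;> fin_cases j <;> simp_all [f]
  have hsurj : Function.Surjective f := by
    rintro ⟨x, hx⟩
    simp only [Set.mem_insert_iff, Set.mem_singleton_iff] at hx
    rcases hx with rfl | rfl | rfl | rfl
    · exact ⟨0, rfl⟩
    · exact ⟨1, rfl⟩
    · exact ⟨2, rfl⟩
    · exact ⟨3, rfl⟩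
  refine ⟨⟨Equiv.ofBijective f ⟨hinj, hsurj⟩, ?_⟩⟩
  intro i j
  show (G.induce ({a, b, c, d} : Set V)).Adj (f i) (f j) ↔ c4rel i j
  fin_cases i <;> fin_cases j <;>
    simp [f, c4rel, comap_adj, hab, hbc, hcd, hda, hac, hbd,
      hab.symm, hbc.symm, hcd.symm, hda.symm, hca, hdb]

end Transfer

section TriviallyPerfect

universe u

variable {V : Type*} (G : SimpleGraph V)

lemma split_colorable (A : Set V)
    (hcross : ∀ u ∈ A, ∀ v, v ∉ A → ¬ G.Adj u v) {m : ℕ}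
    (hA : (G.induce A).Colorable m) (hB : (G.induce Aᶜ).Colorable m) : G.Colorable m := by
  classical
  obtain ⟨cA⟩ := hA; obtain ⟨cB⟩ := hB
  refine ⟨SimpleGraph.Coloring.mk
    (fun v => if h : v ∈ A then cA ⟨v, h⟩ else cB ⟨v, h⟩) ?_⟩
  intro u v huv
  by_cases hu : u ∈ A <;> by_cases hv : v ∈ A
  · simp only [dif_pos hu, dif_pos hv]
    exact cA.valid (by exact huv : (G.induce A).Adj ⟨u, hu⟩ ⟨v, hv⟩)
  · exact absurd huv (hcross u hu v hv)
  · exact absurd huv.symm (hcross v hv u hu)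
  · simp only [dif_neg hu, dif_neg hv]
    exact cB.valid (by exact huv : (G.induce Aᶜ).Adj ⟨u, hu⟩ ⟨v, hv⟩)

lemma cliqueNum_induce_le [Fintype V] (A : Set V) :
    haveI : Fintype A := Fintype.ofFinite A
    (G.induce A).cliqueNum ≤ G.cliqueNum := by
  classical
  haveI : Fintype A := Fintype.ofFinite A
  obtain ⟨s, hs⟩ := (G.induce A).exists_isNClique_cliqueNum
  have hcl : G.IsClique (s.map ⟨Subtype.val, Subtype.val_injective⟩) := by
    intro x hx y hy hxy
    simp only [Finset.coe_map, Set.mem_image, Finset.mem_coe] at hx hy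
    obtain ⟨x', hx', rfl⟩ := hx
    obtain ⟨y', hy', rfl⟩ := hy
    exact hs.isClique hx' hy' (fun hc => hxy (by rw [hc]))
  have := hcl.card_le_cliqueNum
  rwa [Finset.card_map, hs.card_eq] at this

lemma cliqueNum_succ_le_of_universal [Fintype V] (v : V)
    (hv : ∀ u, u ≠ v → G.Adj v u) :
    haveI : Fintype ({u | u ≠ v} : Set V) := Fintype.ofFinite _
    (G.induce {u | u ≠ v}).cliqueNum + 1 ≤ G.cliqueNum := by
  classical
  haveI : Fintype ({u | u ≠ v} : Set V) := Fintype.ofFinite _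
  obtain ⟨s, hs⟩ := (G.induce {u | u ≠ v}).exists_isNClique_cliqueNum
  set t : Finset V := s.map ⟨Subtype.val, Subtype.val_injective⟩ with ht
  have hvt : v ∉ t := by
    simp only [ht, Finset.mem_map, Function.Embedding.coeFn_mk]
    rintro ⟨⟨x, hx⟩, -, h⟩
    exact hx h
  have hcl : G.IsClique (insert v t : Finset V) := by
    intro x hx y hy hxy
    simp only [Finset.coe_insert, Set.mem_insert_iff, Finset.mem_coe, ht,
      Finset.mem_map, Function.Embedding.coeFn_mk] at hx hy
    rcases hx with rfl | ⟨⟨x', hx'⟩, hxs, rfl⟩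
    · rcases hy with rfl | ⟨⟨y', hy'⟩, hys, rfl⟩
      · exact absurd rfl hxy
      · exact hv y' hy'
    · rcases hy with rfl | ⟨⟨y', hy'⟩, hys, rfl⟩
      · exact (hv x' hx').symm
      · exact hs.isClique hxs hys (fun hc => hxy (by rw [hc]))
  have := hcl.card_le_cliqueNum
  rwa [Finset.card_insert_of_notMem hvt, Finset.card_map, hs.card_eq] at this

lemma colorable_succ_of_universal [Fintype V] (v : V) {m : ℕ}
    (hm : (G.induce {u | u ≠ v}).Colorable m) : G.Colorable (m + 1) := by
  classical
  obtain ⟨c⟩ := hm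
  refine ⟨SimpleGraph.Coloring.mk
    (fun u => if h : u = v then Fin.last m else (c ⟨u, h⟩).castSucc) ?_⟩
  intro x y hxy
  by_cases hx : x = v <;> by_cases hy : y = v
  · exact absurd (hx ▸ hy ▸ hxy) (G.irrefl)
  · simp only [dif_pos hx, dif_neg hy]
    exact fun h => (Fin.castSucc_lt_last (c ⟨y, hy⟩)).ne h.symm
  · simp only [dif_neg hx, dif_pos hy]
    exact (Fin.castSucc_lt_last (c ⟨x, hx⟩)).ne
  · simp only [dif_neg hx, dif_neg hy]
    intro h
    exact c.valid (by exact hxy : (G.induce {u | u ≠ v}).Adj ⟨x, hx⟩ ⟨y, hy⟩)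
      (Fin.castSucc_injective _ h)

lemma tp_colorable (n : ℕ) : ∀ {V : Type u} [Fintype V] (G : SimpleGraph V),
    Fintype.card V ≤ n →
    (∀ a b c d : V, G.Adj a b → G.Adj b c → G.Adj c d →
      ¬G.Adj a c → ¬G.Adj a d → ¬G.Adj b d → False) →
    (∀ a b c d : V, a ≠ c → b ≠ d → G.Adj a b → G.Adj b c → G.Adj c d → G.Adj d a →
      ¬G.Adj a c → ¬G.Adj b d → False) →
    G.Colorable G.cliqueNum := by
  induction n with
  | zero =>
    intro V _ G hcard _ _
    haveI : IsEmpty V := Fintype.card_eq_zero_iff.mp (Nat.le_zero.mp hcard)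
    exact Colorable.of_isEmpty (G := G) _
  | succ n IH =>
    intro V _ G hcard hP hC
    by_cases hne : Nonempty V
    swap
    · haveI : IsEmpty V := not_nonempty_iff.mp hne
      exact Colorable.of_isEmpty (G := G) _
    obtain ⟨v, -, hv⟩ := Finset.univ.exists_max_image
      (fun u => (G.neighborSet u).ncard) ⟨Classical.arbitrary V, Finset.mem_univ _⟩
    by_cases huniv : ∀ u, u ≠ v → G.Adj v u
    · -- universal vertex
      haveI : Fintype ({u | u ≠ v} : Set V) := Fintype.ofFinite _
      have hlt : Fintype.card ({u | u ≠ v} : Set V) < Fintype.card V :=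
        Fintype.card_lt_of_injective_of_notMem Subtype.val Subtype.val_injective
          (b := v) (by simp)
      have hcol := IH (G.induce {u | u ≠ v}) (by omega)
        (fun a b c d hab hbc hcd h1 h2 h3 => hP a.1 b.1 c.1 d.1 hab hbc hcd h1 h2 h3)
        (fun a b c d hac hbd hab hbc hcd hda h1 h2 =>
          hC a.1 b.1 c.1 d.1 (fun h => hac (Subtype.ext h)) (fun h => hbd (Subtype.ext h))
            hab hbc hcd hda h1 h2)
      exact (colorable_succ_of_universal G v hcol).mono
        (cliqueNum_succ_le_of_universal G v huniv)
    · push_neg at huniv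
      obtain ⟨u, hune, hunadj⟩ := huniv
      set A : Set V := insert v (G.neighborSet v) with hA
      have huA : u ∉ A := by
        simp only [hA, Set.mem_insert_iff, mem_neighborSet]
        push_neg
        exact ⟨hune, hunadj⟩
      have hcross : ∀ w ∈ A, ∀ x, x ∉ A → ¬ G.Adj w x := by
        intro w hw x hx hadj
        rcases Set.mem_insert_iff.mp hw with rfl | hwN
        · exact hx (Set.mem_insert_of_mem _ hadj)
        · have hvw : G.Adj v w := hwN
          have hxv : x ≠ v := fun h => hx (h ▸ Set.mem_insert _ _)
          have hvx : ¬ G.Adj v x := fun h => hx (Set.mem_insert_of_mem _ h)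
          have key : ∀ y, G.Adj v y → y ≠ w → G.Adj w y := by
            intro y hvy hyw
            by_contra hwy
            by_cases hyx : G.Adj y x
            · exact hC v w x y (fun h => hxv h.symm) (fun h => hyw h.symm)
                hvw hadj hyx.symm hvy.symm hvx hwy
            · exact hP x w v y hadj.symm hvw.symm hvy
                (fun h => hvx h.symm) (fun h => hyx h.symm) hwy
          have hsub : insert v (insert x (G.neighborSet v \ {w})) ⊆ G.neighborSet w := by
            intro z hz
            rcases hz with rfl | hz
            · exact hvw.symm
            rcases hz with rfl | ⟨hzN, hzw⟩
            · exact hadj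
            · exact key z hzN (by simpa using hzw)
          have hx1 : x ∉ insert x (G.neighborSet v \ {w}) ∨ True := Or.inr trivial
          have hx2 : x ∉ G.neighborSet v \ {w} := fun h => hvx h.1
          have hv1 : v ∉ insert x (G.neighborSet v \ {w}) := by
            intro h
            rcases h with h | h
            · exact hxv h.symm
            · exact G.irrefl h.1
          have hle := Set.ncard_le_ncard hsub (Set.toFinite _)
          rw [Set.ncard_insert_of_notMem hv1 (Set.toFinite _),
            Set.ncard_insert_of_notMem hx2 (Set.toFinite _),
            Set.ncard_diff_singleton_of_mem hwN] at hle
          have hposs : 0 < (G.neighborSet v).ncard :=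
            (Set.ncard_pos (Set.toFinite _)).mpr ⟨w, hwN⟩
          have hwv := hv w (Finset.mem_univ w)
          omega
      haveI : Fintype A := Fintype.ofFinite _
      haveI : Fintype (Aᶜ : Set V) := Fintype.ofFinite _
      have hltA : Fintype.card A < Fintype.card V :=
        Fintype.card_lt_of_injective_of_notMem Subtype.val Subtype.val_injective
          (b := u) (by simpa using huA)
      have hltB : Fintype.card (Aᶜ : Set V) < Fintype.card V :=
        Fintype.card_lt_of_injective_of_notMem Subtype.val Subtype.val_injective
          (b := v) (by simp [hA])
      have hcolA := IH (G.induce A) (by omega)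
        (fun a b c d hab hbc hcd h1 h2 h3 => hP a.1 b.1 c.1 d.1 hab hbc hcd h1 h2 h3)
        (fun a b c d hac hbd hab hbc hcd hda h1 h2 =>
          hC a.1 b.1 c.1 d.1 (fun h => hac (Subtype.ext h)) (fun h => hbd (Subtype.ext h))
            hab hbc hcd hda h1 h2)
      have hcolB := IH (G.induce (Aᶜ : Set V)) (by omega)
        (fun a b c d hab hbc hcd h1 h2 h3 => hP a.1 b.1 c.1 d.1 hab hbc hcd h1 h2 h3)
        (fun a b c d hac hbd hab hbc hcd hda h1 h2 =>
          hC a.1 b.1 c.1 d.1 (fun h => hac (Subtype.ext h)) (fun h => hbd (Subtype.ext h))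
            hab hbc hcd hda h1 h2)
      exact split_colorable G A hcross
        (hcolA.mono (cliqueNum_induce_le G A))
        (hcolB.mono (cliqueNum_induce_le G (Aᶜ : Set V)))

end TriviallyPerfect


/-- Every Bψ-perfect graph is perfect. -/
theorem pseudoB_pseudoachromatic_perfect_is_perfect {V : Type*} [Fintype V] (G : SimpleGraph V)
    (h : ∀ s : Set V,
      pseudoBChromaticNumber (G.induce s) = pseudoachromaticNumber (G.induce s)) :
    ∀ s : Set V, (G.induce s).chromaticNumber = ((G.induce s).cliqueNum : ℕ∞) := by
  classical
  have noP4 : ∀ a b c d : V, G.Adj a b → G.Adj b c → G.Adj c d →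
      ¬G.Adj a c → ¬G.Adj a d → ¬G.Adj b d → False := by
    intro a b c d hab hbc hcd hac had hbd
    obtain ⟨e⟩ := induced_p4_iso G a b c d hab hbc hcd hac had hbd
    exact B_ne_psi_of_iso e.symm p4_complete3 p4_noDom3 p4_noDom4 (h {a, b, c, d})
  have noC4 : ∀ a b c d : V, a ≠ c → b ≠ d → G.Adj a b → G.Adj b c → G.Adj c d → G.Adj d a →
      ¬G.Adj a c → ¬G.Adj b d → False := by
    intro a b c d nac nbd hab hbc hcd hda hac hbd
    obtain ⟨e⟩ := induced_c4_iso G a b c d nac nbd hab hbc hcd hda hac hbd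
    exact B_ne_psi_of_iso e.symm c4_complete3 c4_noDom3 c4_noDom4 (h {a, b, c, d})
  intro s
  haveI : Fintype s := Fintype.ofFinite _
  have hcol := tp_colorable (Fintype.card s) (G.induce s) le_rfl
    (fun a b c d hab hbc hcd h1 h2 h3 => noP4 a.1 b.1 c.1 d.1 hab hbc hcd h1 h2 h3)
    (fun a b c d hac hbd hab hbc hcd hda h1 h2 =>
      noC4 a.1 b.1 c.1 d.1 (fun hh => hac (Subtype.ext hh)) (fun hh => hbd (Subtype.ext hh))
        hab hbc hcd hda h1 h2)
  apply le_antisymm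
  · exact hcol.chromaticNumber_le
  · obtain ⟨t, ht⟩ := (G.induce s).exists_isNClique_cliqueNum
    have := ht.isClique.card_le_chromaticNumber
    rwa [ht.card_eq] at this
end

section
/- A finite simple graph G is Γh-perfect (for every induced subgraph H, the Grundy number of H equals the Hadwiger number of H) if and only if G is ωγ-perfect (for every induced subgraph H, the clique number of H equals the pseudo-Grundy number of H). -/
open SimpleGraph

section Aux
set_option linter.unusedVariables false
universe u
variable {V : Type u}

def IsTP {V : Type u} (G : SimpleGraph V) : Prop :=
  ∀ ⦃a b c d : V⦄, a ≠ c → b ≠ d → G.Adj a b → G.Adj b c → G.Adj c d →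
    ¬ G.Adj a c → ¬ G.Adj b d → False

lemma IsTP.induce {G : SimpleGraph V} (h : IsTP G) (s : Set V) : IsTP (G.induce s) := by
  rintro ⟨a, ha⟩ ⟨b, hb⟩ ⟨c, hc⟩ ⟨d, hd⟩ hac hbd h1 h2 h3 h4 h5
  exact h (fun e => hac (Subtype.ext e)) (fun e => hbd (Subtype.ext e)) h1 h2 h3
    (fun e => h4 e) (fun e => h5 e)

noncomputable def induceInduceIso (G : SimpleGraph V) (A : Set V) (B : Set V) (h : B ⊆ A) :
    (G.induce A).induce {w : ↥A | w.1 ∈ B} ≃g G.induce B where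
  toFun := fun x => ⟨x.1.1, x.2⟩
  invFun := fun x => ⟨⟨x.1, h x.2⟩, x.2⟩
  left_inv := fun x => rfl
  right_inv := fun x => rfl
  map_rel_iff' := Iff.rfl

lemma not_connected_pair {G : SimpleGraph V} {x y : V} (hxy : x ≠ y)
    (hadj : ¬ G.Adj x y) : ¬ (G.induce {x, y}).Connected := by
  intro h
  have hx : x ∈ ({x, y} : Set V) := Set.mem_insert _ _
  have hy : y ∈ ({x, y} : Set V) := Set.mem_insert_of_mem _ rfl
  obtain ⟨w⟩ := h.preconnected ⟨x, hx⟩ ⟨y, hy⟩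
  cases w with
  | nil => exact hxy rfl
  | cons h' p =>
    rename_i u
    have : G.Adj x u.1 := h'
    rcases u.2 with h2 | h2
    · rw [h2] at this; exact G.irrefl this
    · rw [Set.mem_singleton_iff] at h2; rw [h2] at this; exact hadj this

lemma connected_singleton (G : SimpleGraph V) (v : V) : (G.induce {v}).Connected := by
  haveI : Nonempty ↥({v} : Set V) := ⟨⟨v, rfl⟩⟩
  refine ⟨?_⟩
  intro a b
  have : a = b := Subtype.ext (a.2.trans b.2.symm)
  exact this ▸ Reachable.refl _

lemma clique_lift {G : SimpleGraph V} {s : Set V} {m : ℕ} {t : Finset ↥s}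
    (ht : (G.induce s).IsNClique m t) : ∃ t' : Finset V, G.IsNClique m t' := by
  haveI := Classical.decEq V
  refine ⟨t.image Subtype.val, ?_, ?_⟩
  · rintro x hx y hy hne
    simp only [Finset.coe_image, Set.mem_image, Finset.mem_coe] at hx hy
    obtain ⟨x', hx', rfl⟩ := hx
    obtain ⟨y', hy', rfl⟩ := hy
    exact ht.1 hx' hy' (fun e => hne (congrArg _ e))
  · rw [Finset.card_image_of_injective _ Subtype.val_injective, ht.2]

lemma clique_insert_univ [Fintype V] {G : SimpleGraph V} {z : V}
    (hz : ∀ w, w ≠ z → G.Adj z w) {m : ℕ} {t : Finset ↥({z}ᶜ : Set V)}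
    (ht : (G.induce ({z}ᶜ : Set V)).IsNClique m t) : ∃ t' : Finset V, G.IsNClique (m + 1) t' := by
  haveI := Classical.decEq V
  refine ⟨insert z (t.image Subtype.val), ?_, ?_⟩
  · rintro x hx y hy hne
    simp only [Finset.coe_insert, Set.mem_insert_iff, Finset.coe_image, Set.mem_image,
      Finset.mem_coe] at hx hy
    rcases hx with rfl | ⟨x', hx', rfl⟩
    · rcases hy with rfl | ⟨y', hy', rfl⟩
      · exact absurd rfl hne
      · exact hz _ (fun e => y'.2 (by simp [e]))
    · rcases hy with rfl | ⟨y', hy', rfl⟩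
      · exact (hz _ (fun e => x'.2 (by simp [e]))).symm
      · exact ht.1 hx' hy' (fun e => hne (congrArg _ e))
  · rw [Finset.card_insert_of_notMem, Finset.card_image_of_injective _ Subtype.val_injective,
      ht.2]
    intro hmem
    obtain ⟨x', _, he⟩ := Finset.mem_image.mp hmem
    exact x'.2 (by simp [he])

lemma minor_le_card [Fintype V] {G : SimpleGraph V} {k : ℕ} (h : HasCompleteMinor G k) :
    k ≤ Fintype.card V := by
  obtain ⟨B, hconn, hdisj, -⟩ := h
  have hne : ∀ i, (B i).Nonempty := fun i => by
    obtain ⟨⟨x, hx⟩⟩ := (hconn i).nonempty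
    exact ⟨x, hx⟩
  choose f hf using hne
  have : Function.Injective f := by
    intro i j hij
    by_contra hne'
    exact Set.disjoint_left.mp (hdisj i j hne') (hf i) (hij ▸ hf j)
  simpa using Fintype.card_le_of_injective f this


lemma minor_le_card' [Fintype V] {G : SimpleGraph V} {k : ℕ} (h : HasCompleteMinor G k) :
    k ≤ Fintype.card V := by
  obtain ⟨B, hconn, hdisj, -⟩ := h
  have hne : ∀ i, (B i).Nonempty := fun i => by
    obtain ⟨⟨x, hx⟩⟩ := (hconn i).nonempty
    exact ⟨x, hx⟩
  choose f hf using hne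
  have : Function.Injective f := by
    intro i j hij
    by_contra hne'
    exact Set.disjoint_left.mp (hdisj i j hne') (hf i) (hij ▸ hf j)
  simpa using Fintype.card_le_of_injective f this

private lemma frontier_aux {G : SimpleGraph V} :
    ∀ {w v : V}, G.Walk w v → ¬ G.Adj v w → w ≠ v →
      ∃ x y, G.Adj v x ∧ G.Adj x y ∧ ¬ G.Adj v y ∧ y ≠ v := by
  intro w v p
  induction p with
  | nil => intro _ h; exact absurd rfl h
  | @cons a b e h q ih =>
    intro hadj hne
    by_cases hb : b = e
    · rw [hb] at h; exact absurd h.symm hadj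
    · by_cases hvb : G.Adj e b
      · exact ⟨b, a, hvb, h.symm, hadj, hne⟩
      · exact ih hvb hb

lemma IsTP.exists_universal [Fintype V] {G : SimpleGraph V} (hTP : IsTP G)
    (hc : G.Connected) : ∃ z : V, ∀ w, w ≠ z → G.Adj z w := by
  haveI := Classical.decEq V
  haveI : DecidableRel G.Adj := Classical.decRel _
  haveI : Nonempty V := hc.nonempty
  obtain ⟨v, -, hv⟩ := Finset.exists_max_image Finset.univ (fun x => (G.neighborFinset x).card)
    ⟨Classical.arbitrary V, Finset.mem_univ _⟩
  refine ⟨v, fun w hw => ?_⟩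
  by_contra hadj
  have hadj' : ¬ G.Adj v w := hadj
  obtain ⟨p⟩ := hc.preconnected w v
  obtain ⟨x, y, hvx, hxy, hvy, hyv⟩ := frontier_aux p hadj' hw
  -- every neighbor of v other than x is a neighbor of x
  have hnb : ∀ t, G.Adj v t → t ≠ x → G.Adj x t := by
    intro t hvt htx
    by_contra hxt
    -- pattern (t, v, x, y)
    exact hTP (a := t) (b := v) (c := x) (d := y) htx (fun e => hyv e.symm) hvt.symm hvx hxy
      (fun e => hxt e.symm) hvy
  -- so the neighborhood of x is strictly bigger than that of v
  have hsub : (G.neighborFinset v).erase x ∪ {v, y} ⊆ G.neighborFinset x := by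
    intro t ht
    rcases Finset.mem_union.mp ht with ht | ht
    · obtain ⟨htx, htv⟩ := Finset.mem_erase.mp ht
      exact (G.mem_neighborFinset _ _).mpr (hnb t ((G.mem_neighborFinset _ _).mp htv) htx)
    · rcases Finset.mem_insert.mp ht with rfl | ht
      · exact (G.mem_neighborFinset _ _).mpr hvx.symm
      · rw [Finset.mem_singleton] at ht; subst ht
        exact (G.mem_neighborFinset _ _).mpr hxy
  have hdisj : Disjoint ((G.neighborFinset v).erase x) ({v, y} : Finset V) := by
    rw [Finset.disjoint_right]
    intro t ht
    rcases Finset.mem_insert.mp ht with rfl | ht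
    · intro hmem
      exact G.irrefl ((G.mem_neighborFinset _ _).mp (Finset.mem_of_mem_erase hmem))
    · rw [Finset.mem_singleton] at ht; subst ht
      intro hmem
      exact hvy ((G.mem_neighborFinset _ _).mp (Finset.mem_of_mem_erase hmem))
  have hx_mem : x ∈ G.neighborFinset v := (G.mem_neighborFinset _ _).mpr hvx
  have hcard : (G.neighborFinset v).card + 1 ≤ (G.neighborFinset x).card := by
    have h1 := Finset.card_le_card hsub
    rw [Finset.card_union_of_disjoint hdisj, Finset.card_erase_of_mem hx_mem] at h1
    have hvy' : v ≠ y := fun e => hyv e.symm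
    have h2 : ({v, y} : Finset V).card = 2 := Finset.card_pair hvy'
    rw [h2] at h1
    have h3 : 1 ≤ (G.neighborFinset v).card := Finset.card_pos.mpr ⟨x, hx_mem⟩
    omega
  have := hv x (Finset.mem_univ x)
  omega

lemma connected_iUnion_branch {G : SimpleGraph V} {k : ℕ} (hk : 0 < k) (B : Fin k → Set V)
    (hconn : ∀ i, (G.induce (B i)).Connected)
    (hadj : ∀ i j, i ≠ j → ∃ u ∈ B i, ∃ v ∈ B j, G.Adj u v) :
    (G.induce (⋃ i, B i)).Connected := by
  haveI := Classical.decEq (Fin k)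
  have i0 : Fin k := ⟨0, hk⟩
  have key : ∀ t : Finset (Fin k), (G.induce (B i0 ∪ ⋃ i ∈ t, B i)).Connected := by
    intro t
    induction t using Finset.induction_on with
    | empty =>
      rw [show (⋃ i ∈ (∅ : Finset (Fin k)), B i) = ∅ by simp, Set.union_empty]
      exact hconn i0
    | @insert j t hj ih =>
      have hins : (⋃ i ∈ insert j t, B i) = B j ∪ ⋃ i ∈ t, B i := by
        exact Finset.set_biUnion_insert _ _ _
      by_cases hji : j = i0
      · subst hji
        rw [hins, ← Set.union_assoc, Set.union_self]
        exact ih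
      · have heq : B i0 ∪ ⋃ i ∈ insert j t, B i = (B i0 ∪ ⋃ i ∈ t, B i) ∪ B j := by
          rw [hins, ← Set.union_assoc, Set.union_comm (B i0) (B j), Set.union_assoc,
            Set.union_comm (B j) _]
        rw [heq]
        obtain ⟨u, hu, w, hw, huw⟩ := hadj i0 j (fun e => hji e.symm)
        exact connected_induce_union ih.preconnected (hconn j).preconnected (Set.mem_union_left _ hu) hw huw
  have := key Finset.univ
  have heq : B i0 ∪ ⋃ i ∈ Finset.univ, B i = ⋃ i, B i := by
    simp
    exact Set.subset_iUnion B i0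
  rwa [heq] at this

section Bdd
variable [Fintype V] {G : SimpleGraph V}

lemma pg_mem_le_card {k : ℕ} (c : V → Fin k) (h : IsPseudoGrundyColoring G c) :
    k ≤ Fintype.card V := by
  simpa using Fintype.card_le_of_surjective c h.1

lemma bddAbove_pg : BddAbove {k | ∃ c : V → Fin k, IsPseudoGrundyColoring G c} :=
  ⟨Fintype.card V, fun _ ⟨c, hc⟩ => pg_mem_le_card c hc⟩

lemma bddAbove_grundy :
    BddAbove {k | ∃ c : V → Fin k, IsProperColoring G c ∧ IsPseudoGrundyColoring G c} :=
  ⟨Fintype.card V, fun _ ⟨c, hc⟩ => pg_mem_le_card c hc.2⟩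

lemma bddAbove_minor : BddAbove {k | HasCompleteMinor G k} :=
  ⟨Fintype.card V, fun _ h => minor_le_card' h⟩

/-- from a clique of size m we get a pseudo-Grundy coloring with m colors, provided m > 0 -/
lemma clique_pseudoGrundy {m : ℕ} {t : Finset V} (hm : 0 < m) (ht : G.IsNClique m t) :
    ∃ c : V → Fin m, IsPseudoGrundyColoring G c := by
  haveI := Classical.decEq V
  have e : ↥t ≃ Fin m := (t.equivFin).trans (finCongr ht.2)
  refine ⟨fun x => if h : x ∈ t then e ⟨x, h⟩ else ⟨0, hm⟩, ?_, ?_⟩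
  · intro i
    refine ⟨(e.symm i).1, ?_⟩
    simp only [dif_pos (e.symm i).2]
    simp
  · intro v j hj
    by_cases hv : v ∈ t
    · simp only [dif_pos hv] at hj
      set y := e.symm j with hy
      have hyv : (y : V) ≠ v := by
        intro hcontra
        have h1 : (⟨v, hv⟩ : {x // x ∈ t}) = y := Subtype.ext hcontra.symm
        have : e ⟨v, hv⟩ = j := by rw [h1, hy]; simp
        rw [this] at hj
        exact lt_irrefl _ hj
      refine ⟨y, ?_, ?_⟩
      · exact (ht.1 y.2 hv hyv).symm
      · simp only [dif_pos y.2]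
        simp [hy]
    · simp only [dif_neg hv] at hj
      exact absurd hj (by simp [Fin.lt_def])

lemma cliqueNum_le_pseudoGrundy : G.cliqueNum ≤ pseudoGrundyNumber G := by
  obtain ⟨t, ht⟩ := G.exists_isNClique_cliqueNum
  rcases Nat.eq_zero_or_pos G.cliqueNum with h0 | hpos
  · simp [h0]
  · obtain ⟨c, hc⟩ := clique_pseudoGrundy hpos ht
    exact le_csSup bddAbove_pg ⟨c, hc⟩

lemma cliqueNum_le_hadwiger : G.cliqueNum ≤ hadwigerNumber G := by
  obtain ⟨t, ht⟩ := G.exists_isNClique_cliqueNum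
  haveI := Classical.decEq V
  set m := G.cliqueNum
  have e : ↥t ≃ Fin m := (t.equivFin).trans (finCongr ht.2)
  have hmem : HasCompleteMinor G m := by
    refine ⟨fun i => {(e.symm i).1}, fun i => connected_singleton G _, ?_, ?_⟩
    · intro i j hij
      rw [Set.disjoint_singleton_left (α := V)]
      intro hmem
      rw [Set.mem_singleton_iff] at hmem
      exact hij (by
        have := congrArg e (Subtype.ext (α := V) (p := (· ∈ t)) hmem : e.symm i = e.symm j)
        simpa using this)
    · intro i j hij
      refine ⟨_, rfl, _, rfl, ?_⟩
      refine ht.1 (e.symm i).2 (e.symm j).2 ?_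
      intro hcontra
      exact hij (by
        have := congrArg e (Subtype.ext (α := V) (p := (· ∈ t)) hcontra : e.symm i = e.symm j)
        simpa using this)
  exact le_csSup bddAbove_minor hmem

lemma grundy_le_pseudoGrundy : grundyNumber G ≤ pseudoGrundyNumber G := by
  rcases Set.eq_empty_or_nonempty {k | ∃ c : V → Fin k, IsProperColoring G c ∧
      IsPseudoGrundyColoring G c} with h | h
  · rw [grundyNumber, h, csSup_empty]; exact Nat.zero_le _
  · exact csSup_le h (fun k ⟨c, hc⟩ => le_csSup bddAbove_pg ⟨c, hc.2⟩)

end Bdd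

end Aux
section Induction
universe u
variable {V : Type u}

lemma singleton_clique {G : SimpleGraph V} (v : V) : G.IsNClique 1 {v} := by
  constructor
  · simp only [Finset.coe_singleton]
    exact Set.pairwise_singleton _ _
  · exact Finset.card_singleton _

/-- restriction to the reachability closure of a vertex -/
lemma reach_closed {G : SimpleGraph V} {v w u : V} (hw : G.Reachable v w) (h : G.Adj w u) :
    G.Reachable v u := hw.trans h.reachable

lemma reach_connected (G : SimpleGraph V) (v : V) :
    (G.induce {w | G.Reachable v w}).Connected := by
  haveI := Classical.decEq V
  apply induce_connected_of_patches v (by exact Reachable.rfl)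
  intro w hw
  obtain ⟨p⟩ := (hw : G.Reachable v w)
  refine ⟨{x | x ∈ p.support}, ?_, p.start_mem_support, p.end_mem_support, ?_⟩
  · intro x hx
    have : G.Walk v x := p.takeUntil x hx
    exact ⟨this⟩
  · exact (p.connected_induce_support).preconnected _ _

lemma IsTP.clique_of_pseudoGrundy :
    ∀ (n : ℕ) {V : Type u} [Fintype V] (G : SimpleGraph V), Fintype.card V ≤ n →
      IsTP G → ∀ {k : ℕ} (c : V → Fin k), IsPseudoGrundyColoring G c →
      ∃ t : Finset V, G.IsNClique k t := by
  intro n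
  induction n with
  | zero =>
    intro V _ G hcard hTP k c hc
    haveI : IsEmpty V := Fintype.card_eq_zero_iff.mp (Nat.le_zero.mp hcard)
    have hk : k = 0 := by
      rcases Nat.eq_zero_or_pos k with h | h
      · exact h
      · obtain ⟨w, -⟩ := hc.1 ⟨0, h⟩
        exact (IsEmpty.false w).elim
    subst hk
    exact ⟨∅, by simp [SimpleGraph.isNClique_empty]⟩
  | succ n ih =>
    intro V _ G hcard hTP k c hc
    haveI := Classical.decEq V
    rcases Nat.lt_or_ge k 2 with hk2 | hk2
    · -- k = 0 or 1
      rcases Nat.eq_zero_or_pos k with h0 | h1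
      · subst h0; exact ⟨∅, by simp [SimpleGraph.isNClique_empty]⟩
      · have hk1 : k = 1 := by omega
        obtain ⟨w, -⟩ := hc.1 ⟨0, h1⟩
        exact hk1 ▸ ⟨{w}, singleton_clique w⟩
    · -- k ≥ 2
      obtain ⟨v, hv⟩ := hc.1 ⟨k - 1, by omega⟩
      set C : Set V := {w | G.Reachable v w} with hCdef
      have hvC : v ∈ C := by exact Reachable.rfl
      have hCclosed : ∀ {w u}, w ∈ C → G.Adj w u → u ∈ C := fun hw h => reach_closed hw h
      -- the restricted coloring is pseudo-Grundy on the closure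
      have hC' : IsPseudoGrundyColoring (G.induce C) (fun w : ↥C => c w.1) := by
        constructor
        · intro i
          rcases Nat.lt_or_ge i.1 (k - 1) with hlt | hge
          · have : i < c v := by rw [hv, Fin.lt_def]; exact hlt
            obtain ⟨u, hadj, hcu⟩ := hc.2 v i this
            exact ⟨⟨u, hCclosed hvC hadj⟩, hcu⟩
          · have hieq : i = ⟨k - 1, by omega⟩ := Fin.ext (by
              show i.1 = k - 1
              have := i.isLt; omega)
            refine ⟨⟨v, hvC⟩, ?_⟩
            show c v = i
            rw [hieq]; exact hv
        · intro w j hj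
          obtain ⟨u, hadj, hcu⟩ := hc.2 w.1 j hj
          exact ⟨⟨u, hCclosed w.2 hadj⟩, hadj, hcu⟩
      by_cases hCuniv : C = Set.univ
      · -- the graph is connected; use a universal vertex
        have hconn : G.Connected := by
          haveI : Nonempty V := ⟨v⟩
          refine ⟨fun x y => ?_⟩
          have hx : x ∈ C := hCuniv ▸ Set.mem_univ x
          have hy : y ∈ C := hCuniv ▸ Set.mem_univ y
          exact (hx : G.Reachable v x).symm.trans hy
        obtain ⟨z, hz⟩ := hTP.exists_universal hconn
        set m : Fin k := c z with hm
        haveI : DecidablePred (· ∈ ({z}ᶜ : Set V)) := fun _ => Classical.dec _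
        set V' : Set V := {z}ᶜ with hV'
        have hcard' : Fintype.card ↥V' ≤ n := by
          have : Fintype.card ↥V' < Fintype.card V :=
            Fintype.card_subtype_lt (x := z) (by simp [hV'])
          omega
        -- the recoloring on the complement of z
        have hmlt : m.1 < k := m.isLt
        set c' : ↥V' → Fin (k - 1) := fun w =>
          if h : (c w.1).1 < m.1 then ⟨(c w.1).1, by omega⟩
          else if h2 : (c w.1).1 = m.1 then ⟨0, by omega⟩
          else ⟨(c w.1).1 - 1, by have := (c w.1).isLt; omega⟩ with hc'def
        have hne_z : ∀ (w : V), c w ≠ m → w ∈ V' := by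
          intro w hw
          simp only [hV', Set.mem_compl_iff, Set.mem_singleton_iff]
          intro h; exact hw (h ▸ rfl)
        have hc'lt : ∀ (w : ↥V') (h : (c w.1).1 < m.1), c' w = ⟨(c w.1).1, by omega⟩ := by
          intro w h; simp only [hc'def]; rw [dif_pos h]
        have hc'eq : ∀ (w : ↥V') (h : (c w.1).1 = m.1), c' w = ⟨0, by omega⟩ := by
          intro w h; simp only [hc'def]; rw [dif_neg (by omega), dif_pos h]
        have hc'gt : ∀ w : ↥V', m.1 < (c w.1).1 →
            c' w = ⟨(c w.1).1 - 1, by have := (c w.1).isLt; omega⟩ := by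
          intro w h; simp only [hc'def]; rw [dif_neg (by omega), dif_neg (by omega)]
        have hc'' : IsPseudoGrundyColoring (G.induce V') c' := by
          constructor
          · intro t
            rcases Nat.lt_or_ge t.1 m.1 with ht | ht
            · obtain ⟨w, hw⟩ := hc.1 ⟨t.1, by omega⟩
              have hwval : (c w).1 = t.1 := congrArg Fin.val hw
              have hwm : c w ≠ m := fun h => by rw [h] at hwval; omega
              refine ⟨⟨w, hne_z w hwm⟩, ?_⟩
              rw [hc'lt ⟨w, hne_z w hwm⟩ (by show (c w).1 < m.1; omega)]
              exact Fin.ext (by show (c w).1 = t.1; omega)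
            · obtain ⟨w, hw⟩ := hc.1 ⟨t.1 + 1, by have := t.isLt; omega⟩
              have hwval : (c w).1 = t.1 + 1 := congrArg Fin.val hw
              have hwm : c w ≠ m := fun h => by rw [h] at hwval; omega
              refine ⟨⟨w, hne_z w hwm⟩, ?_⟩
              rw [hc'gt ⟨w, hne_z w hwm⟩ (by show m.1 < (c w).1; omega)]
              exact Fin.ext (by show (c w).1 - 1 = t.1; omega)
          · intro w j hj
            rcases Nat.lt_trichotomy (c w.1).1 m.1 with hlt | heq | hgt
            · rw [hc'lt w hlt] at hj
              have hjlt : j.1 < (c w.1).1 := hj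
              obtain ⟨u, hadj, hcu⟩ := hc.2 w.1 ⟨j.1, by omega⟩
                (by rw [Fin.lt_def]; exact hjlt)
              have hcuval : (c u).1 = j.1 := congrArg Fin.val hcu
              have hum : c u ≠ m := fun h => by rw [h] at hcuval; omega
              refine ⟨⟨u, hne_z u hum⟩, hadj, ?_⟩
              rw [hc'lt ⟨u, hne_z u hum⟩ (by show (c u).1 < m.1; omega)]
              exact Fin.ext (by show (c u).1 = j.1; omega)
            · rw [hc'eq w heq] at hj
              exact absurd hj (by rw [Fin.lt_def]; show ¬ j.1 < 0; omega)
            · rw [hc'gt w hgt] at hj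
              have hjlt : j.1 < (c w.1).1 - 1 := hj
              rcases Nat.lt_or_ge j.1 m.1 with hjm | hjm
              · obtain ⟨u, hadj, hcu⟩ := hc.2 w.1 ⟨j.1, by omega⟩
                  (by rw [Fin.lt_def]; show j.1 < (c w.1).1; omega)
                have hcuval : (c u).1 = j.1 := congrArg Fin.val hcu
                have hum : c u ≠ m := fun h => by rw [h] at hcuval; omega
                refine ⟨⟨u, hne_z u hum⟩, hadj, ?_⟩
                rw [hc'lt ⟨u, hne_z u hum⟩ (by show (c u).1 < m.1; omega)]
                exact Fin.ext (by show (c u).1 = j.1; omega)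
              · obtain ⟨u, hadj, hcu⟩ := hc.2 w.1 ⟨j.1 + 1, by have := (c w.1).isLt; omega⟩
                  (by rw [Fin.lt_def]; show j.1 + 1 < (c w.1).1; omega)
                have hcuval : (c u).1 = j.1 + 1 := congrArg Fin.val hcu
                have hum : c u ≠ m := fun h => by rw [h] at hcuval; omega
                refine ⟨⟨u, hne_z u hum⟩, hadj, ?_⟩
                rw [hc'gt ⟨u, hne_z u hum⟩ (by show m.1 < (c u).1; omega)]
                exact Fin.ext (by show (c u).1 - 1 = j.1; omega)
        obtain ⟨t'', ht''⟩ := ih (G.induce V') hcard' (hTP.induce V') c' hc''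
        obtain ⟨t', ht'⟩ := clique_insert_univ hz ht''
        rw [show k - 1 + 1 = k by omega] at ht'
        exact ⟨t', ht'⟩
      · -- restrict to the closure, which is smaller
        obtain ⟨x, hx⟩ := (Set.ne_univ_iff_exists_notMem C).mp hCuniv
        haveI : DecidablePred (· ∈ C) := fun _ => Classical.dec _
        have hcard' : Fintype.card ↥C ≤ n := by
          have : Fintype.card ↥C < Fintype.card V := Fintype.card_subtype_lt (x := x) hx
          omega
        obtain ⟨t', ht'⟩ := ih (G.induce C) hcard' (hTP.induce C) _ hC'
        exact clique_lift ht'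

end Induction
section MinorInduction
universe u
variable {V : Type u}

lemma IsTP.clique_of_minor :
    ∀ (n : ℕ) {V : Type u} [Fintype V] (G : SimpleGraph V), Fintype.card V ≤ n →
      IsTP G → ∀ {k : ℕ}, HasCompleteMinor G k →
      ∃ t : Finset V, G.IsNClique k t := by
  intro n
  induction n with
  | zero =>
    intro V _ G hcard hTP k hmin
    haveI : IsEmpty V := Fintype.card_eq_zero_iff.mp (Nat.le_zero.mp hcard)
    have hk : k = 0 := by
      rcases Nat.eq_zero_or_pos k with h | h
      · exact h
      · obtain ⟨B, hconn, -, -⟩ := hmin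
        obtain ⟨⟨x, -⟩⟩ := (hconn ⟨0, h⟩).nonempty
        exact (IsEmpty.false x).elim
    subst hk
    exact ⟨∅, by simp [SimpleGraph.isNClique_empty]⟩
  | succ n ih =>
    intro V _ G hcard hTP k hmin
    haveI := Classical.decEq V
    obtain ⟨B, hconn, hdisj, hedge⟩ := hmin
    rcases Nat.lt_or_ge k 2 with hk2 | hk2
    · rcases Nat.eq_zero_or_pos k with h0 | h1
      · subst h0; exact ⟨∅, by simp [SimpleGraph.isNClique_empty]⟩
      · have hk1 : k = 1 := by omega
        obtain ⟨⟨x, -⟩⟩ := (hconn ⟨0, h1⟩).nonempty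
        exact hk1 ▸ ⟨{x}, singleton_clique x⟩
    · -- k ≥ 2
      set U : Set V := ⋃ i, B i with hUdef
      have hUconn : (G.induce U).Connected :=
        connected_iUnion_branch (by omega) B hconn hedge
      by_cases hUuniv : U = Set.univ
      · -- G is connected; pick a universal vertex
        have hGconn : G.Connected := by
          rw [hUuniv] at hUconn
          exact (induceUnivIso G).connected_iff.mp hUconn
        obtain ⟨z, hz⟩ := hTP.exists_universal hGconn
        obtain ⟨i0, hzB⟩ := Set.mem_iUnion.mp (hUuniv ▸ Set.mem_univ z : z ∈ U)
        haveI : DecidablePred (· ∈ ({z}ᶜ : Set V)) := fun _ => Classical.dec _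
        set V' : Set V := {z}ᶜ with hV'
        have hcard' : Fintype.card ↥V' ≤ n := by
          have : Fintype.card ↥V' < Fintype.card V :=
            Fintype.card_subtype_lt (x := z) (by simp [hV'])
          omega
        -- reindexing injection avoiding i0
        set f : Fin (k - 1) → Fin k := fun j =>
          if h : j.1 < i0.1 then ⟨j.1, by have := j.isLt; omega⟩
          else ⟨j.1 + 1, by have := j.isLt; omega⟩ with hfdef
        have hfne : ∀ j, f j ≠ i0 := by
          intro j
          simp only [hfdef]
          by_cases h : j.1 < i0.1
          · rw [dif_pos h]; intro he; rw [Fin.ext_iff] at he; simp at he; omega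
          · rw [dif_neg h]; intro he; rw [Fin.ext_iff] at he; simp at he; omega
        have hfinj : Function.Injective f := by
          intro a b hab
          simp only [hfdef] at hab
          by_cases ha : a.1 < i0.1 <;> by_cases hb : b.1 < i0.1 <;>
            simp only [dif_pos, dif_neg, ha, hb] at hab <;>
            (try rw [dif_pos ha] at hab) <;> (try rw [dif_neg ha] at hab) <;>
            (try rw [dif_pos hb] at hab) <;> (try rw [dif_neg hb] at hab) <;>
            rw [Fin.ext_iff] at hab ⊢ <;> simp at hab ⊢ <;> omega
        have hBsub : ∀ j : Fin (k - 1), B (f j) ⊆ V' := by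
          intro j x hx
          simp only [hV', Set.mem_compl_iff, Set.mem_singleton_iff]
          intro he
          exact Set.disjoint_left.mp (hdisj (f j) i0 (hfne j)) hx (he ▸ hzB)
        -- the branch sets restricted to V'
        have hmin' : HasCompleteMinor (G.induce V') (k - 1) := by
          refine ⟨fun j => {w : ↥V' | w.1 ∈ B (f j)}, ?_, ?_, ?_⟩
          · intro j
            exact (induceInduceIso G V' (B (f j)) (hBsub j)).connected_iff.mpr (hconn (f j))
          · intro i j hij
            rw [Set.disjoint_left]
            intro w hwi hwj
            exact Set.disjoint_left.mp (hdisj (f i) (f j) (fun he => hij (hfinj he)))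
              hwi hwj
          · intro i j hij
            obtain ⟨u, hu, w, hw, huw⟩ := hedge (f i) (f j) (fun he => hij (hfinj he))
            exact ⟨⟨u, hBsub i hu⟩, hu, ⟨w, hBsub j hw⟩, hw, huw⟩
        obtain ⟨t'', ht''⟩ := ih (G.induce V') hcard' (hTP.induce V') hmin'
        obtain ⟨t', ht'⟩ := clique_insert_univ hz ht''
        rw [show k - 1 + 1 = k by omega] at ht'
        exact ⟨t', ht'⟩
      · -- restrict to U
        obtain ⟨x, hx⟩ := (Set.ne_univ_iff_exists_notMem U).mp hUuniv
        haveI : DecidablePred (· ∈ U) := fun _ => Classical.dec _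
        have hcard' : Fintype.card ↥U ≤ n := by
          have : Fintype.card ↥U < Fintype.card V := Fintype.card_subtype_lt (x := x) hx
          omega
        have hBsub : ∀ i, B i ⊆ U := fun i => Set.subset_iUnion B i
        have hmin' : HasCompleteMinor (G.induce U) k := by
          refine ⟨fun i => {w : ↥U | w.1 ∈ B i}, ?_, ?_, ?_⟩
          · intro i
            exact (induceInduceIso G U (B i) (hBsub i)).connected_iff.mpr (hconn i)
          · intro i j hij
            rw [Set.disjoint_left]
            intro w hwi hwj
            exact Set.disjoint_left.mp (hdisj i j hij) hwi hwj
          · intro i j hij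
            obtain ⟨u, hu, w, hw, huw⟩ := hedge i j hij
            exact ⟨⟨u, hBsub i hu⟩, hu, ⟨w, hBsub j hw⟩, hw, huw⟩
        obtain ⟨t', ht'⟩ := ih (G.induce U) hcard' (hTP.induce U) hmin'
        exact clique_lift ht'

end MinorInduction
section Greedy
universe u
variable {V : Type u}

lemma cliqueNum_le_card [Fintype V] (G : SimpleGraph V) : G.cliqueNum ≤ Fintype.card V := by
  obtain ⟨t, ht⟩ := G.exists_isNClique_cliqueNum
  rw [← ht.2]
  exact Finset.card_le_univ t

lemma one_le_cliqueNum [Fintype V] (G : SimpleGraph V) (v : V) : 1 ≤ G.cliqueNum := by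
  have h : G.IsNClique 1 {v} := singleton_clique v
  have := h.1.card_le_cliqueNum
  rwa [h.2] at this

lemma exists_grundy_ge_cliqueNum :
    ∀ (n : ℕ) {V : Type u} [Fintype V] (G : SimpleGraph V), Fintype.card V ≤ n →
      ∃ k : ℕ, G.cliqueNum ≤ k ∧
        ∃ c : V → Fin k, IsProperColoring G c ∧ IsPseudoGrundyColoring G c := by
  intro n
  induction n with
  | zero =>
    intro V _ G hcard
    haveI : IsEmpty V := Fintype.card_eq_zero_iff.mp (Nat.le_zero.mp hcard)
    refine ⟨0, ?_, fun v => (IsEmpty.false v).elim, ?_, ?_⟩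
    · have := cliqueNum_le_card G
      simp only [Fintype.card_eq_zero] at this
      omega
    · intro u; exact (IsEmpty.false u).elim
    · exact ⟨fun i => (Nat.not_lt_zero _ i.isLt).elim, fun v => (IsEmpty.false v).elim⟩
  | succ n ih =>
    intro V _ G hcard
    classical
    rcases isEmpty_or_nonempty V with hV | hV
    · refine ⟨0, ?_, fun v => (IsEmpty.false v).elim, ?_, ?_⟩
      · have := cliqueNum_le_card G
        simp only [Fintype.card_eq_zero] at this
        omega
      · intro u; exact (IsEmpty.false u).elim
      · exact ⟨fun i => (Nat.not_lt_zero _ i.isLt).elim, fun v => (IsEmpty.false v).elim⟩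
    · -- pick a vertex in a maximum clique
      obtain ⟨Q, hQ⟩ := G.exists_isNClique_cliqueNum
      have hω : 1 ≤ G.cliqueNum := one_le_cliqueNum G (Classical.arbitrary V)
      have hQne : Q.Nonempty := by
        rw [← Finset.card_pos, hQ.2]; omega
      obtain ⟨v, hvQ⟩ := hQne
      haveI : DecidablePred (· ∈ ({v}ᶜ : Set V)) := fun _ => Classical.dec _
      set V' : Set V := {v}ᶜ with hV'
      have hvmem : ∀ x : V, x ≠ v → x ∈ V' := by
        intro x hx
        simp only [hV', Set.mem_compl_iff, Set.mem_singleton_iff]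
        exact hx
      have hcard' : Fintype.card ↥V' ≤ n := by
        have : Fintype.card ↥V' < Fintype.card V :=
          Fintype.card_subtype_lt (x := v) (by simp [hV'])
        omega
      obtain ⟨k', hk', c', hprop', hpg'⟩ := ih (G.induce V') hcard'
      -- the clique Q minus v lives in G'
      set t' : Finset ↥V' := (Q.erase v).subtype (· ∈ V') with ht'def
      have ht'mem : ∀ x : ↥V', x ∈ t' ↔ x.1 ∈ Q.erase v := by
        intro x
        simp [ht'def, Finset.mem_subtype]
      have ht' : (G.induce V').IsNClique (G.cliqueNum - 1) t' := by
        constructor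
        · intro x hx y hy hxy
          rw [Finset.mem_coe, ht'mem] at hx hy
          exact hQ.1 (Finset.mem_of_mem_erase hx) (Finset.mem_of_mem_erase hy)
            (fun he => hxy (Subtype.ext he))
        · rw [ht'def]
          rw [Finset.card_subtype]
          rw [Finset.filter_true_of_mem (fun x hx => hvmem x (Finset.ne_of_mem_erase hx))]
          rw [Finset.card_erase_of_mem hvQ, hQ.2]
      have hωk' : G.cliqueNum - 1 ≤ k' := by
        have := ht'.1.card_le_cliqueNum
        rw [ht'.2] at this
        omega
      -- neighbors of v, as subtype elements
      by_cases hfull : ∀ m : Fin k', ∃ u : ↥V', G.Adj v u.1 ∧ c' u = m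
      · -- extend with a fresh color
        refine ⟨k' + 1, by omega, ?_⟩
        set c : V → Fin (k' + 1) := fun x =>
          if h : x = v then ⟨k', by omega⟩ else (c' ⟨x, hvmem x h⟩).castSucc with hcdef
        have hcv : c v = ⟨k', by omega⟩ := by simp [hcdef]
        have hcx : ∀ (x : V) (h : x ≠ v), c x = (c' ⟨x, hvmem x h⟩).castSucc := by
          intro x h; simp only [hcdef]; rw [dif_neg h]
        refine ⟨c, ?_, ?_, ?_⟩
        · intro x y hadj
          by_cases hx : x = v
          · have hadj' : G.Adj v y := hx ▸ hadj
            have hyv : y ≠ v := fun he => G.irrefl (he ▸ hadj')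
            rw [hx, hcv, hcx y hyv]
            intro he
            have := congrArg Fin.val he
            simp at this
            have := (c' ⟨y, hvmem y hyv⟩).isLt
            omega
          · by_cases hy : y = v
            · rw [hy, hcv, hcx x hx]
              intro he
              have := congrArg Fin.val he
              simp at this
              have := (c' ⟨x, hvmem x hx⟩).isLt
              omega
            · rw [hcx x hx, hcx y hy]
              intro he
              have : c' ⟨x, hvmem x hx⟩ = c' ⟨y, hvmem y hy⟩ := by
                rwa [Fin.castSucc_inj] at he
              exact hprop' ⟨x, hvmem x hx⟩ ⟨y, hvmem y hy⟩ hadj this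
        · -- surjectivity
          intro i
          rcases Nat.lt_or_ge i.1 k' with hi | hi
          · obtain ⟨u, hu⟩ := hpg'.1 ⟨i.1, hi⟩
            have huv : u.1 ≠ v := by
              intro he
              have := u.2
              rw [he] at this
              simp [hV'] at this
            refine ⟨u.1, ?_⟩
            rw [hcx u.1 huv]
            have : (⟨u.1, hvmem u.1 huv⟩ : ↥V') = u := Subtype.ext rfl
            rw [this, hu]
            exact Fin.ext rfl
          · refine ⟨v, ?_⟩
            rw [hcv]
            exact Fin.ext (by have := i.isLt; show k' = i.1; omega)
        · -- pseudo-Grundy property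
          intro x j hj
          by_cases hx : x = v
          · rw [hx, hcv] at hj
            rw [hx]
            have hjk : j.1 < k' := hj
            obtain ⟨u, hadj, hcu⟩ := hfull ⟨j.1, hjk⟩
            have huv : u.1 ≠ v := by
              intro he; have := u.2; rw [he] at this; simp [hV'] at this
            refine ⟨u.1, hadj, ?_⟩
            rw [hcx u.1 huv]
            have heq : (⟨u.1, hvmem u.1 huv⟩ : ↥V') = u := Subtype.ext rfl
            rw [heq, hcu]
            exact Fin.ext rfl
          · rw [hcx x hx] at hj
            have hjlt : j.1 < (c' ⟨x, hvmem x hx⟩).1 := hj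
            obtain ⟨u, hadj, hcu⟩ := hpg'.2 ⟨x, hvmem x hx⟩ ⟨j.1, by
                have := (c' ⟨x, hvmem x hx⟩).isLt; omega⟩ (by rw [Fin.lt_def]; exact hjlt)
            have huv : u.1 ≠ v := by
              intro he; have := u.2; rw [he] at this; simp [hV'] at this
            refine ⟨u.1, hadj, ?_⟩
            rw [hcx u.1 huv]
            have heq : (⟨u.1, hvmem u.1 huv⟩ : ↥V') = u := Subtype.ext rfl
            rw [heq, hcu]
            exact Fin.ext rfl
      · -- some color is missing among the neighbors of v : use the least such
        push_neg at hfull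
        obtain ⟨m, hm⟩ := hfull
        have hP : ∃ i : ℕ, ∃ h : i < k', ∀ u : ↥V', G.Adj v u.1 → c' u ≠ ⟨i, h⟩ := by
          refine ⟨m.1, m.isLt, ?_⟩
          intro u hadj he
          exact hm u hadj (by rw [he])
        set m₀ := Nat.find hP with hm₀def
        obtain ⟨hm₀lt, hm₀prop⟩ := Nat.find_spec hP
        have hm₀min : ∀ (j : ℕ) (hjm : j < m₀) (hjk : j < k'),
            ∃ u : ↥V', G.Adj v u.1 ∧ c' u = ⟨j, by omega⟩ := by
          intro j hj hjk
          have := Nat.find_min hP hj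
          push_neg at this
          obtain ⟨u, hadj, hcu⟩ := this hjk
          exact ⟨u, hadj, hcu⟩
        -- first, the clique number is at most k' in this case
        have hωk : G.cliqueNum ≤ k' := by
          by_contra hcon
          have hω1 : G.cliqueNum = k' + 1 := by omega
          -- Q.erase v is a k'-clique among the neighbors of v with k' distinct colors
          have hcards : t'.card = k' := by rw [ht'.2]; omega
          have hinj : Set.InjOn c' ↑t' := by
            intro x hx y hy hxy
            by_contra hne
            exact hprop' x y (ht'.1 hx hy hne) hxy
          have himage : t'.image c' = Finset.univ := by
            apply Finset.eq_univ_of_card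
            rw [Finset.card_image_of_injOn hinj, hcards, Fintype.card_fin]
          have hmem : (⟨m₀, hm₀lt⟩ : Fin k') ∈ t'.image c' := by
            rw [himage]; exact Finset.mem_univ _
          obtain ⟨u, hu, hcu⟩ := Finset.mem_image.mp hmem
          have huQ : u.1 ∈ Q.erase v := (ht'mem u).mp hu
          have hadj : G.Adj v u.1 :=
            hQ.1 hvQ (Finset.mem_of_mem_erase huQ) (fun he => (Finset.ne_of_mem_erase huQ) he.symm)
          exact hm₀prop u hadj hcu
        refine ⟨k', hωk, ?_⟩
        set c : V → Fin k' := fun x =>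
          if h : x = v then ⟨m₀, hm₀lt⟩ else c' ⟨x, hvmem x h⟩ with hcdef
        have hcv : c v = ⟨m₀, hm₀lt⟩ := by simp [hcdef]
        have hcx : ∀ (x : V) (h : x ≠ v), c x = c' ⟨x, hvmem x h⟩ := by
          intro x h; simp only [hcdef]; rw [dif_neg h]
        refine ⟨c, ?_, ?_, ?_⟩
        · intro x y hadj
          by_cases hx : x = v
          · have hadj' : G.Adj v y := hx ▸ hadj
            have hyv : y ≠ v := fun he => G.irrefl (he ▸ hadj')
            rw [hx, hcv, hcx y hyv]
            exact fun he => hm₀prop ⟨y, hvmem y hyv⟩ hadj' he.symm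
          · by_cases hy : y = v
            · have hadj' : G.Adj x v := hy ▸ hadj
              rw [hy, hcv, hcx x hx]
              exact fun he => hm₀prop ⟨x, hvmem x hx⟩ hadj'.symm he
            · rw [hcx x hx, hcx y hy]
              exact hprop' ⟨x, hvmem x hx⟩ ⟨y, hvmem y hy⟩ hadj
        · intro i
          obtain ⟨u, hu⟩ := hpg'.1 i
          have huv : u.1 ≠ v := by
            intro he; have := u.2; rw [he] at this; simp [hV'] at this
          refine ⟨u.1, ?_⟩
          rw [hcx u.1 huv]
          have heq : (⟨u.1, hvmem u.1 huv⟩ : ↥V') = u := Subtype.ext rfl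
          rw [heq, hu]
        · intro x j hj
          by_cases hx : x = v
          · rw [hx, hcv] at hj
            rw [hx]
            have hjm : j.1 < m₀ := hj
            obtain ⟨u, hadj, hcu⟩ := hm₀min j.1 hjm (by have := j.isLt; omega)
            have huv : u.1 ≠ v := by
              intro he; have := u.2; rw [he] at this; simp [hV'] at this
            refine ⟨u.1, hadj, ?_⟩
            rw [hcx u.1 huv]
            have heq : (⟨u.1, hvmem u.1 huv⟩ : ↥V') = u := Subtype.ext rfl
            rw [heq, hcu]
          · rw [hcx x hx] at hj
            obtain ⟨u, hadj, hcu⟩ := hpg'.2 ⟨x, hvmem x hx⟩ j hj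
            have huv : u.1 ≠ v := by
              intro he; have := u.2; rw [he] at this; simp [hV'] at this
            refine ⟨u.1, hadj, ?_⟩
            rw [hcx u.1 huv]
            have heq : (⟨u.1, hvmem u.1 huv⟩ : ↥V') = u := Subtype.ext rfl
            rw [heq, hcu]
end Greedy
section Wrappers
universe u
variable {V : Type u} [Fintype V] {G : SimpleGraph V}

lemma IsTP.pseudoGrundy_le_cliqueNum (h : IsTP G) : pseudoGrundyNumber G ≤ G.cliqueNum := by
  rcases Set.eq_empty_or_nonempty {k | ∃ c : V → Fin k, IsPseudoGrundyColoring G c} with he | hne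
  · rw [pseudoGrundyNumber, he, csSup_empty]; exact Nat.zero_le _
  · refine csSup_le hne ?_
    rintro k ⟨c, hc⟩
    obtain ⟨t, ht⟩ := IsTP.clique_of_pseudoGrundy (Fintype.card V) G le_rfl h c hc
    have := ht.1.card_le_cliqueNum
    rwa [ht.2] at this

lemma IsTP.hadwiger_le_cliqueNum (h : IsTP G) : hadwigerNumber G ≤ G.cliqueNum := by
  rcases Set.eq_empty_or_nonempty {k | HasCompleteMinor G k} with he | hne
  · rw [hadwigerNumber, he, csSup_empty]; exact Nat.zero_le _
  · refine csSup_le hne ?_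
    intro k hk
    obtain ⟨t, ht⟩ := IsTP.clique_of_minor (Fintype.card V) G le_rfl h hk
    have := ht.1.card_le_cliqueNum
    rwa [ht.2] at this

lemma cliqueNum_le_grundy {V : Type u} [Fintype V] {G : SimpleGraph V} :
    G.cliqueNum ≤ grundyNumber G := by
  obtain ⟨k, hk, c, hc⟩ := exists_grundy_ge_cliqueNum (Fintype.card V) G le_rfl
  exact hk.trans (le_csSup bddAbove_grundy ⟨c, hc⟩)

end Wrappers
section Counter
universe u
variable {V : Type u}

set_option maxHeartbeats 2000000 in
lemma counterexamples [Fintype V] {G : SimpleGraph V} (h : ¬ IsTP G) :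
    (∃ s : Set V, (G.induce s).cliqueNum ≠ pseudoGrundyNumber (G.induce s)) ∧
    (∃ s : Set V, grundyNumber (G.induce s) ≠ hadwigerNumber (G.induce s)) := by
  classical
  unfold IsTP at h
  push_neg at h
  obtain ⟨a, b, c, d, hnac, hnbd, hab, hbc, hcd, hac, hbd, -⟩ := h
  set s : Set V := {a, b, c, d} with hsdef
  set H : SimpleGraph ↥s := G.induce s with hHdef
  haveI : Fintype ↥s := Fintype.ofFinite _
  have hamem : a ∈ s := by simp [hsdef]
  have hbmem : b ∈ s := by simp [hsdef]
  have hcmem : c ∈ s := by simp [hsdef]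
  have hdmem : d ∈ s := by simp [hsdef]
  set A : ↥s := ⟨a, hamem⟩ with hA
  set B : ↥s := ⟨b, hbmem⟩ with hB
  set C : ↥s := ⟨c, hcmem⟩ with hC
  set D : ↥s := ⟨d, hdmem⟩ with hD
  have hmem : ∀ x : ↥s, x = A ∨ x = B ∨ x = C ∨ x = D := by
    rintro ⟨x, hx⟩
    simp only [hsdef, Set.mem_insert_iff, Set.mem_singleton_iff] at hx
    rcases hx with rfl | rfl | rfl | rfl
    · exact Or.inl rfl
    · exact Or.inr (Or.inl rfl)
    · exact Or.inr (Or.inr (Or.inl rfl))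
    · exact Or.inr (Or.inr (Or.inr rfl))
  have hnad : a ≠ d := by
    intro he
    subst he
    exact hac hcd.symm
  have hAB : A ≠ B := fun he => G.ne_of_adj hab (congrArg Subtype.val he)
  have hBC : B ≠ C := fun he => G.ne_of_adj hbc (congrArg Subtype.val he)
  have hCD : C ≠ D := fun he => G.ne_of_adj hcd (congrArg Subtype.val he)
  have hAC : A ≠ C := fun he => hnac (congrArg Subtype.val he)
  have hBD : B ≠ D := fun he => hnbd (congrArg Subtype.val he)
  have hAD : A ≠ D := fun he => hnad (congrArg Subtype.val he)
  have hHab : H.Adj A B := hab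
  have hHbc : H.Adj B C := hbc
  have hHcd : H.Adj C D := hcd
  have hHnac : ¬ H.Adj A C := fun he => hac he
  have hHnbd : ¬ H.Adj B D := fun he => hbd he
  -- the explicit pseudo-Grundy 3-coloring
  set col : ↥s → Fin 3 := fun x => if x = B then 2 else if x = C then 1 else 0 with hcol
  have hcolA : col A = 0 := by simp [hcol, hAB, hAC]
  have hcolB : col B = 2 := by simp [hcol]
  have hcolC : col C = 1 := by simp [hcol, hBC.symm]
  have hcolD : col D = 0 := by simp [hcol, hBD.symm, hCD.symm]
  have hcolpg : IsPseudoGrundyColoring H col := by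
    constructor
    · intro i
      fin_cases i
      · exact ⟨A, hcolA⟩
      · exact ⟨C, hcolC⟩
      · exact ⟨B, hcolB⟩
    · intro x j hj
      rcases hmem x with rfl | rfl | rfl | rfl
      · rw [hcolA] at hj
        exact absurd hj (by fin_cases j <;> decide)
      · rw [hcolB] at hj
        fin_cases j
        · exact ⟨A, hHab.symm, hcolA⟩
        · exact ⟨C, hHbc, hcolC⟩
        · exact absurd hj (by decide)
      · rw [hcolC] at hj
        fin_cases j
        · exact ⟨D, hHcd, hcolD⟩
        · exact absurd hj (by decide)
        · exact absurd hj (by decide)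
      · rw [hcolD] at hj
        exact absurd hj (by fin_cases j <;> decide)
  have hγ3 : 3 ≤ pseudoGrundyNumber H := le_csSup bddAbove_pg ⟨col, hcolpg⟩
  have hω2 : H.cliqueNum ≤ 2 := by
    refine csSup_le ⟨0, ∅, ?_⟩ ?_
    · rw [SimpleGraph.isNClique_empty]
    · rintro n ⟨t, ht⟩
      by_contra hn
      push_neg at hn
      obtain ⟨t', ht'sub, ht'card⟩ := Finset.exists_subset_card_eq (s := t) (n := 3) (by rw [ht.2]; omega)
      obtain ⟨x, y, z, hxy, hxz, hyz, rfl⟩ := Finset.card_eq_three.mp ht'card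
      have hx : x ∈ t := ht'sub (by simp)
      have hy : y ∈ t := ht'sub (by simp)
      have hz : z ∈ t := ht'sub (by simp)
      have axy : H.Adj x y := ht.1 hx hy hxy
      have axz : H.Adj x z := ht.1 hx hz hxz
      have ayz : H.Adj y z := ht.1 hy hz hyz
      have hsymac : ¬ H.Adj C A := fun he => hHnac he.symm
      have hsymbd : ¬ H.Adj D B := fun he => hHnbd he.symm
      rcases hmem x with rfl | rfl | rfl | rfl <;> rcases hmem y with rfl | rfl | rfl | rfl <;>
        rcases hmem z with rfl | rfl | rfl | rfl <;> simp_all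
  refine ⟨⟨s, by rw [← hHdef]; omega⟩, ⟨s, ?_⟩⟩
  rw [← hHdef]
  have hGrundyNonempty : Set.Nonempty
      {k | ∃ cc : ↥s → Fin k, IsProperColoring H cc ∧ IsPseudoGrundyColoring H cc} := by
    obtain ⟨k, -, cc, hcc⟩ := exists_grundy_ge_cliqueNum (Fintype.card ↥s) H le_rfl
    exact ⟨k, cc, hcc⟩
  by_cases hADadj : G.Adj a d
  · -- C4 case : grundy ≤ 2 < 3 ≤ hadwiger
    have hHad : H.Adj A D := hADadj
    have nbrsA : ∀ w, H.Adj A w → w = B ∨ w = D := by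
      intro w hw
      rcases hmem w with rfl | rfl | rfl | rfl
      · exact absurd hw H.irrefl
      · exact Or.inl rfl
      · exact absurd hw hHnac
      · exact Or.inr rfl
    have nbrsB : ∀ w, H.Adj B w → w = A ∨ w = C := by
      intro w hw
      rcases hmem w with rfl | rfl | rfl | rfl
      · exact Or.inl rfl
      · exact absurd hw H.irrefl
      · exact Or.inr rfl
      · exact absurd hw hHnbd
    have nbrsC : ∀ w, H.Adj C w → w = B ∨ w = D := by
      intro w hw
      rcases hmem w with rfl | rfl | rfl | rfl
      · exact absurd hw.symm hHnac
      · exact Or.inl rfl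
      · exact absurd hw H.irrefl
      · exact Or.inr rfl
    have nbrsD : ∀ w, H.Adj D w → w = A ∨ w = C := by
      intro w hw
      rcases hmem w with rfl | rfl | rfl | rfl
      · exact Or.inl rfl
      · exact absurd hw.symm hHnbd
      · exact Or.inr rfl
      · exact absurd hw H.irrefl
    have hΓ2 : grundyNumber H ≤ 2 := by
      refine csSup_le hGrundyNonempty ?_
      rintro k ⟨cc, hprop, hpg⟩
      by_contra hk
      push_neg at hk
      have hk3 : 3 ≤ k := hk
      have h2k : 2 < k := hk3
      have h1k : 1 < k := Nat.lt_of_lt_of_le (by decide) hk3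
      have h0k : 0 < k := Nat.lt_of_lt_of_le (by decide) hk3
      have main : ∀ x p q y : ↥s, H.Adj p y → H.Adj q y →
          (∀ w, H.Adj x w → w = p ∨ w = q) → (∀ w, H.Adj p w → w = x ∨ w = y) →
          (∀ w, H.Adj q w → w = x ∨ w = y) → cc x = ⟨2, h2k⟩ → False := by
        intro x p q y hpy hqy nbrsx nbrsp nbrsq hcx
        obtain ⟨u0, hu0adj, hu0⟩ := hpg.2 x ⟨0, h0k⟩
          (by rw [hcx]; exact Fin.mk_lt_mk.mpr (by decide))
        obtain ⟨u1, hu1adj, hu1⟩ := hpg.2 x ⟨1, h1k⟩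
          (by rw [hcx]; exact Fin.mk_lt_mk.mpr (by decide))
        have key : ∀ z : ↥s, cc z = ⟨1, h1k⟩ → H.Adj z y →
            (∀ w, H.Adj z w → w = x ∨ w = y) → cc y = ⟨0, h0k⟩ := by
          intro z hz hzy nbrsz
          obtain ⟨w, hwadj, hw⟩ := hpg.2 z ⟨0, h0k⟩
            (by rw [hz]; exact Fin.mk_lt_mk.mpr (by decide))
          rcases nbrsz w hwadj with hwx | hwy
          · rw [hwx, hcx] at hw
            exact absurd (Fin.mk.injEq _ _ _ _ ▸ hw) (by decide)
          · rw [hwy] at hw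
            exact hw
        rcases nbrsx u0 hu0adj with h0 | h0 <;> rcases nbrsx u1 hu1adj with h1 | h1
        · rw [h0] at hu0
          rw [h1] at hu1
          rw [hu0] at hu1
          exact absurd (Fin.mk.injEq _ _ _ _ ▸ hu1) (by decide)
        · -- cc p = 0, cc q = 1
          rw [h0] at hu0
          rw [h1] at hu1
          have hy0 := key q hu1 hqy nbrsq
          exact hprop _ _ hpy (hu0.trans hy0.symm)
        · -- cc q = 0, cc p = 1
          rw [h0] at hu0
          rw [h1] at hu1
          have hy0 := key p hu1 hpy nbrsp
          exact hprop _ _ hqy (hu0.trans hy0.symm)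
        · rw [h0] at hu0
          rw [h1] at hu1
          rw [hu0] at hu1
          exact absurd (Fin.mk.injEq _ _ _ _ ▸ hu1) (by decide)
      obtain ⟨x, hx⟩ := hpg.1 ⟨2, h2k⟩
      rcases hmem x with rfl | rfl | rfl | rfl
      · exact main A B D C hHbc hHcd.symm nbrsA nbrsB nbrsD hx
      · exact main B A C D hHad hHcd nbrsB nbrsA nbrsC hx
      · exact main C B D A hHab.symm hHad.symm nbrsC
          (fun w hw => (nbrsB w hw).symm) (fun w hw => (nbrsD w hw).symm) hx
      · exact main D A C B hHab hHbc.symm nbrsD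
          (fun w hw => (nbrsA w hw).symm) (fun w hw => (nbrsC w hw).symm) hx
    have hCAB : C ∉ ({A, B} : Set ↥s) := by
      simp only [Set.mem_insert_iff, Set.mem_singleton_iff]
      push_neg
      exact ⟨Ne.symm hAC, Ne.symm hBC⟩
    have hDAB : D ∉ ({A, B} : Set ↥s) := by
      simp only [Set.mem_insert_iff, Set.mem_singleton_iff]
      push_neg
      exact ⟨Ne.symm hAD, Ne.symm hBD⟩
    have hh3 : 3 ≤ hadwigerNumber H := by
      refine le_csSup bddAbove_minor ?_
      refine ⟨![{A, B}, {C}, {D}], ?_, ?_, ?_⟩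
      · intro i
        fin_cases i
        · exact induce_pair_connected_of_adj hHab
        · exact connected_singleton H C
        · exact connected_singleton H D
      · intro i j hij
        fin_cases i <;> fin_cases j
        · exact absurd rfl hij
        · exact Set.disjoint_singleton_right.mpr hCAB
        · exact Set.disjoint_singleton_right.mpr hDAB
        · exact (Set.disjoint_singleton_right.mpr hCAB).symm
        · exact absurd rfl hij
        · exact Set.disjoint_singleton_right.mpr (by simp [Ne.symm hCD])
        · exact (Set.disjoint_singleton_right.mpr hDAB).symm
        · exact (Set.disjoint_singleton_right.mpr (by simp [Ne.symm hCD] :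
            D ∉ ({C} : Set ↥s))).symm
        · exact absurd rfl hij
      · intro i j hij
        fin_cases i <;> fin_cases j
        · exact absurd rfl hij
        · exact ⟨B, by simp, C, by simp, hHbc⟩
        · exact ⟨A, by simp, D, by simp, hHad⟩
        · exact ⟨C, by simp, B, by simp, hHbc.symm⟩
        · exact absurd rfl hij
        · exact ⟨C, by simp, D, by simp, hHcd⟩
        · exact ⟨D, by simp, A, by simp, hHad.symm⟩
        · exact ⟨D, by simp, C, by simp, hHcd.symm⟩
        · exact absurd rfl hij
    omega
  · -- P4 case : hadwiger ≤ 2 < 3 ≤ grundy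
    have hHnad : ¬ H.Adj A D := fun he => hADadj he
    have hcolproper : IsProperColoring H col := by
      intro x y hxy he
      have hsymac : ¬ H.Adj C A := fun h2 => hHnac h2.symm
      have hsymbd : ¬ H.Adj D B := fun h2 => hHnbd h2.symm
      have hsymad : ¬ H.Adj D A := fun h2 => hHnad h2.symm
      rcases hmem x with rfl | rfl | rfl | rfl <;> rcases hmem y with rfl | rfl | rfl | rfl <;>
        simp_all
    have hΓ3 : 3 ≤ grundyNumber H := le_csSup bddAbove_grundy ⟨col, hcolproper, hcolpg⟩
    have hh2 : hadwigerNumber H ≤ 2 := by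
      refine csSup_le ⟨0, fun i => i.elim0, fun i => i.elim0, fun i => i.elim0,
        fun i => i.elim0⟩ ?_
      rintro k ⟨Bs, hconn, hdisj, hedge⟩
      by_contra hk
      push_neg at hk
      have hk3 : 3 ≤ k := hk
      set i0 : Fin k := ⟨0, by omega⟩ with hi0
      set i1 : Fin k := ⟨1, by omega⟩ with hi1
      set i2 : Fin k := ⟨2, by omega⟩ with hi2
      have h01 : i0 ≠ i1 := by rw [hi0, hi1]; exact fun he => absurd (Fin.mk.injEq _ _ _ _ ▸ he) (by omega)
      have h02 : i0 ≠ i2 := by rw [hi0, hi2]; exact fun he => absurd (Fin.mk.injEq _ _ _ _ ▸ he) (by omega)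
      have h12 : i1 ≠ i2 := by rw [hi1, hi2]; exact fun he => absurd (Fin.mk.injEq _ _ _ _ ▸ he) (by omega)
      have mem_unique : ∀ (x : ↥s) (i j : Fin k), x ∈ Bs i → x ∈ Bs j → i = j := by
        intro x i j hi hj
        by_contra hij
        exact Set.disjoint_left.mp (hdisj i j hij) hi hj
      have adjA : ∀ w, H.Adj A w → w = B := by
        intro w hw
        rcases hmem w with rfl | rfl | rfl | rfl
        · exact absurd hw H.irrefl
        · rfl
        · exact absurd hw hHnac
        · exact absurd hw hHnad
      have adjD : ∀ w, H.Adj D w → w = C := by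
        intro w hw
        rcases hmem w with rfl | rfl | rfl | rfl
        · exact absurd hw.symm hHnad
        · exact absurd hw.symm hHnbd
        · rfl
        · exact absurd hw H.irrefl
      have hchoice : ∃ r p1 p2 : Fin k, r ≠ p1 ∧ r ≠ p2 ∧ p1 ≠ p2 ∧
          B ∉ Bs r ∧ C ∉ Bs r := by
        by_cases h0 : B ∉ Bs i0 ∧ C ∉ Bs i0
        · exact ⟨i0, i1, i2, h01, h02, h12, h0.1, h0.2⟩
        · by_cases h1 : B ∉ Bs i1 ∧ C ∉ Bs i1
          · exact ⟨i1, i0, i2, Ne.symm h01, h12, h02, h1.1, h1.2⟩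
          · push_neg at h0 h1
            refine ⟨i2, i0, i1, Ne.symm h02, Ne.symm h12, h01, ?_, ?_⟩
            · intro hB2
              have hB0 : B ∉ Bs i0 := fun hh => h02 (mem_unique B i0 i2 hh hB2)
              have hB1 : B ∉ Bs i1 := fun hh => h12 (mem_unique B i1 i2 hh hB2)
              have hC0 : C ∈ Bs i0 := by
                rcases Classical.em (B ∈ Bs i0) with hh | hh
                · exact absurd hh hB0
                · by_contra hC0
                  exact hC0 (h0 hh)
              have hC1 : C ∈ Bs i1 := by
                rcases Classical.em (B ∈ Bs i1) with hh | hh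
                · exact absurd hh hB1
                · by_contra hC1
                  exact hC1 (h1 hh)
              exact h01 (mem_unique C i0 i1 hC0 hC1)
            · intro hC2
              have hC0 : C ∉ Bs i0 := fun hh => h02 (mem_unique C i0 i2 hh hC2)
              have hC1 : C ∉ Bs i1 := fun hh => h12 (mem_unique C i1 i2 hh hC2)
              have hB0 : B ∈ Bs i0 := by
                by_contra hB0
                exact hC0 (h0 hB0)
              have hB1 : B ∈ Bs i1 := by
                by_contra hB1
                exact hC1 (h1 hB1)
              exact h01 (mem_unique B i0 i1 hB0 hB1)
      obtain ⟨r, p1, p2, hrp1, hrp2, hp12, hBr, hCr⟩ := hchoice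
      have cross : ∀ w, r ≠ w → (B ∈ Bs w ∧ A ∈ Bs r) ∨ (C ∈ Bs w ∧ D ∈ Bs r) := by
        intro w hrw
        obtain ⟨u, hu, v, hv, huv⟩ := hedge r w hrw
        rcases hmem u with rfl | rfl | rfl | rfl
        · have hvB := adjA v huv
          subst hvB
          exact Or.inl ⟨hv, hu⟩
        · exact absurd hu hBr
        · exact absurd hu hCr
        · have hvC := adjD v huv
          subst hvC
          exact Or.inr ⟨hv, hu⟩
      have final : A ∈ Bs r → D ∈ Bs r → False := by
        intro hAr hDr
        have hsetr : Bs r = {A, D} := by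
          apply Set.Subset.antisymm
          · intro x hx
            rcases hmem x with rfl | rfl | rfl | rfl
            · exact Set.mem_insert _ _
            · exact absurd hx hBr
            · exact absurd hx hCr
            · exact Set.mem_insert_of_mem _ rfl
          · intro x hx
            rcases hx with rfl | hx
            · exact hAr
            · rw [Set.mem_singleton_iff] at hx
              subst hx
              exact hDr
        have hcr := hconn r
        rw [hsetr] at hcr
        exact not_connected_pair hAD hHnad hcr
      rcases cross p1 hrp1 with ⟨hB1, hAr⟩ | ⟨hC1, hDr⟩ <;>
        rcases cross p2 hrp2 with ⟨hB2, hAr'⟩ | ⟨hC2, hDr'⟩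
      · exact hp12 (mem_unique B p1 p2 hB1 hB2)
      · exact final hAr hDr'
      · exact final hAr' hDr
      · exact hp12 (mem_unique C p1 p2 hC1 hC2)
    omega

end Counter

/-- `G` is Γh-perfect iff `G` is ωγ-perfect. -/
theorem grundy_hadwiger_perfect_iff_omega_pseudoGrundy_perfect
    {V : Type*} [Fintype V] (G : SimpleGraph V) :
    (∀ s : Set V, grundyNumber (G.induce s) = hadwigerNumber (G.induce s)) ↔
      (∀ s : Set V, (G.induce s).cliqueNum = pseudoGrundyNumber (G.induce s)) := by
  constructor
  · intro hL
    have hTP : IsTP G := by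
      by_contra h
      obtain ⟨-, s, hs⟩ := counterexamples h
      exact hs (hL s)
    intro s
    haveI : Fintype ↥s := Fintype.ofFinite _
    exact le_antisymm cliqueNum_le_pseudoGrundy ((hTP.induce s).pseudoGrundy_le_cliqueNum)
  · intro hR
    have hTP : IsTP G := by
      by_contra h
      obtain ⟨⟨s, hs⟩, -⟩ := counterexamples h
      exact hs (hR s)
    intro s
    haveI : Fintype ↥s := Fintype.ofFinite _
    have hTPs := hTP.induce s
    refine le_antisymm ?_ ?_
    · exact (grundy_le_pseudoGrundy.trans hTPs.pseudoGrundy_le_cliqueNum).trans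
        cliqueNum_le_hadwiger
    · exact hTPs.hadwiger_le_cliqueNum.trans cliqueNum_le_grundy
end

section
/- Every Γh-perfect graph is perfect; that is, if for every induced subgraph H of G the Grundy number of H equals the Hadwiger number of H, then for every induced subgraph H of G the chromatic number of H equals the clique number of H. -/
open SimpleGraph

set_option linter.unnecessarySimpa false

noncomputable def greedyCol (adj : ℕ → ℕ → Prop) : ℕ → ℕ
  | i => sInf {m | ∀ j, ∀ _ : j < i, adj j i → greedyCol adj j ≠ m}
termination_by i => i

lemma greedyCol_mem (adj : ℕ → ℕ → Prop) (i : ℕ) :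
    ∀ j < i, adj j i → greedyCol adj j ≠ greedyCol adj i := by
  have hne : {m | ∀ j, ∀ _ : j < i, adj j i → greedyCol adj j ≠ m}.Nonempty := by
    refine ⟨(Finset.range i).sup (fun j => greedyCol adj j) + 1, fun j hj _ => ?_⟩
    have : greedyCol adj j ≤ (Finset.range i).sup (fun j => greedyCol adj j) :=
      Finset.le_sup (Finset.mem_range.mpr hj)
    omega
  have := Nat.sInf_mem hne
  rw [greedyCol]
  exact this

lemma greedyCol_min (adj : ℕ → ℕ → Prop) (i m : ℕ) (hm : m < greedyCol adj i) :
    ∃ j < i, adj j i ∧ greedyCol adj j = m := by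
  rw [greedyCol] at hm
  have := Nat.notMem_of_lt_sInf hm
  simp only [Set.mem_setOf_eq, not_forall] at this
  obtain ⟨j, hj, hadj, hcol⟩ := this
  exact ⟨j, hj, hadj, by simpa using hcol⟩


lemma exists_grundy {W : Type*} [Fintype W] (H : SimpleGraph W) :
    ∃ (k : ℕ) (c : W → Fin k), IsProperColoring H c ∧ IsPseudoGrundyColoring H c := by
  classical
  set n := Fintype.card W with hn
  set e : Fin n ≃ W := (Fintype.equivFin W).symm with he
  set adj : ℕ → ℕ → Prop :=
    fun i j => ∃ hi : i < n, ∃ hj : j < n, H.Adj (e ⟨i, hi⟩) (e ⟨j, hj⟩) with hadj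
  set col : ℕ → ℕ := greedyCol adj with hcol
  set k : ℕ := (Finset.range n).sup (fun i => col i + 1) with hk
  have hbound : ∀ w : W, col (e.symm w : Fin n).val < k := by
    intro w
    have : col (e.symm w : Fin n).val + 1 ≤ k :=
      Finset.le_sup (f := fun i => col i + 1) (Finset.mem_range.mpr (e.symm w).isLt)
    omega
  refine ⟨k, fun w => ⟨col (e.symm w : Fin n).val, hbound w⟩, ?_, ?_, ?_⟩
  · -- proper
    intro u v huv hcuv
    have hval : col (e.symm u : Fin n).val = col (e.symm v : Fin n).val :=
      congrArg Fin.val hcuv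
    have hne : (e.symm u : Fin n) ≠ e.symm v := by
      intro hh
      exact H.irrefl (by rw [show u = v from e.symm.injective hh] at huv; exact huv)
    rcases lt_or_gt_of_ne (fun hh => hne (Fin.ext hh) :
        ((e.symm u : Fin n) : ℕ) ≠ ((e.symm v : Fin n) : ℕ)) with hlt | hlt
    · exact greedyCol_mem adj _ _ hlt ⟨(e.symm u).isLt, (e.symm v).isLt, by
        simpa using huv⟩ hval
    · exact greedyCol_mem adj _ _ hlt ⟨(e.symm v).isLt, (e.symm u).isLt, by
        simpa using huv.symm⟩ hval.symm
  · -- surjective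
    intro m
    have hmk : (m : ℕ) < k := m.isLt
    obtain ⟨i, hi, hmi⟩ := Finset.lt_sup_iff.mp hmk
    rw [Finset.mem_range] at hi
    have hmle : (m : ℕ) ≤ col i := by omega
    rcases eq_or_lt_of_le hmle with heq | hlt
    · refine ⟨e ⟨i, hi⟩, Fin.ext ?_⟩
      simpa [heq] using congrArg col (congrArg Fin.val (e.symm_apply_apply ⟨i, hi⟩))
    · obtain ⟨j, hji, hadjji, hcolj⟩ := greedyCol_min adj i (m : ℕ) hlt
      obtain ⟨hj', hi', _⟩ := hadjji
      refine ⟨e ⟨j, hj'⟩, Fin.ext ?_⟩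
      simp only [Equiv.symm_apply_apply]
      exact hcolj
  · -- pseudo-grundy step condition
    intro v j hj
    have hlt : (j : ℕ) < col (e.symm v : Fin n).val := hj
    obtain ⟨i, hii, hadji, hcoli⟩ := greedyCol_min adj _ _ hlt
    obtain ⟨hi', hv', hA⟩ := hadji
    refine ⟨e ⟨i, hi'⟩, ?_, Fin.ext ?_⟩
    · have : (⟨((e.symm v : Fin n) : ℕ), hv'⟩ : Fin n) = e.symm v := Fin.ext rfl
      rw [this, e.apply_symm_apply] at hA
      exact hA.symm
    · simp only [Equiv.symm_apply_apply]
      exact hcoli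


def NoP4 {W : Type*} (H : SimpleGraph W) : Prop :=
  ∀ p q r u : W, H.Adj p q → H.Adj q r → H.Adj r u →
    ¬H.Adj p r → ¬H.Adj p u → ¬H.Adj q u → False


lemma exists_common_nbr {W : Type*} [Fintype W] [DecidableEq W] {H : SimpleGraph W}
    [DecidableRel H.Adj]
    (hnp : NoP4 H) {S : Finset W} (hSne : S.Nonempty)
    (hSind : ∀ a ∈ S, ∀ b ∈ S, ¬H.Adj a b)
    {C : Finset W} (hC : (C : Set W).Pairwise H.Adj)
    (hnb : ∀ w ∈ C, ∃ x ∈ S, H.Adj w x) :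
    ∃ x ∈ S, ∀ w ∈ C, H.Adj x w := by
  obtain ⟨x, hxS, hmax⟩ :=
    S.exists_max_image (fun x => (C.filter (fun w => H.Adj x w)).card) hSne
  refine ⟨x, hxS, ?_⟩
  by_contra hcon
  push_neg at hcon
  obtain ⟨cb, hcbC, hcbn⟩ := hcon
  obtain ⟨s', hs'S, hs'adj⟩ := hnb cb hcbC
  have hkey : ∀ w ∈ C, H.Adj x w → H.Adj s' w := by
    intro w hwC hxw
    by_contra hns'
    have hwcb : w ≠ cb := fun hh => hcbn (hh ▸ hxw)
    exact hnp x w cb s' hxw (hC hwC hcbC hwcb) hs'adj hcbn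
      (hSind x hxS s' hs'S) (fun hh => hns' hh.symm)
  have hsub : C.filter (fun w => H.Adj x w) ⊆ C.filter (fun w => H.Adj s' w) := by
    intro w hw
    rw [Finset.mem_filter] at hw ⊢
    exact ⟨hw.1, hkey w hw.1 hw.2⟩
  have hss : C.filter (fun w => H.Adj x w) ⊂ C.filter (fun w => H.Adj s' w) := by
    refine (Finset.ssubset_iff_of_subset hsub).mpr ⟨cb, ?_, ?_⟩
    · rw [Finset.mem_filter]; exact ⟨hcbC, hs'adj.symm⟩
    · rw [Finset.mem_filter]; exact fun hh => hcbn hh.2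
  exact absurd (hmax s' hs'S) (not_le.mpr (Finset.card_lt_card hss))


lemma clique_of_grundy {W : Type*} [Fintype W] {H : SimpleGraph W} (hnp : NoP4 H)
    {k : ℕ} {c : W → Fin k} (hp : IsProperColoring H c) (hg : IsPseudoGrundyColoring H c) :
    ∃ T : Finset W, H.IsClique T ∧ k ≤ T.card := by
  classical
  have key : ∀ d t : ℕ, t + d = k → ∃ T : Finset W, (T : Set W).Pairwise H.Adj ∧
      (∀ w ∈ T, t ≤ (c w : ℕ)) ∧ (∀ j : Fin k, t ≤ (j : ℕ) → ∃ w ∈ T, c w = j) := by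
    intro d
    induction d with
    | zero =>
      intro t ht
      exact ⟨∅, by simp, by simp, fun j hj => absurd j.isLt (by omega)⟩
    | succ d ih =>
      intro t ht
      obtain ⟨T, hTclique, hTcol, hTsurj⟩ := ih (t + 1) (by omega)
      have htk : t < k := by omega
      set jt : Fin k := ⟨t, htk⟩ with hjt
      set S : Finset W := Finset.univ.filter (fun u => c u = jt) with hS
      have hSne : S.Nonempty := by
        obtain ⟨u, hu⟩ := hg.1 jt
        exact ⟨u, by simp [hS, hu]⟩
      have hSind : ∀ a ∈ S, ∀ b ∈ S, ¬H.Adj a b := by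
        intro a ha b hb hab
        rw [hS, Finset.mem_filter] at ha hb
        exact hp a b hab (ha.2.trans hb.2.symm)
      have hnb : ∀ w ∈ T, ∃ x ∈ S, H.Adj w x := by
        intro w hw
        have hlt : jt < c w := by
          have := hTcol w hw
          exact Fin.lt_def.mpr (by simp [hjt]; omega)
        obtain ⟨u, huadj, hucol⟩ := hg.2 w jt hlt
        exact ⟨u, by simp [hS, hucol], huadj⟩
      obtain ⟨x, hxS, hxadj⟩ := exists_common_nbr hnp hSne hSind hTclique hnb
      have hcx : c x = jt := by
        rw [hS, Finset.mem_filter] at hxS; exact hxS.2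
      have hxT : x ∉ T := by
        intro hh
        have := hTcol x hh
        rw [hcx] at this
        simp [hjt] at this
      refine ⟨insert x T, ?_, ?_, ?_⟩
      · rw [Finset.coe_insert]
        exact Set.pairwise_insert.mpr
          ⟨hTclique, fun b hb _ => ⟨hxadj b hb, (hxadj b hb).symm⟩⟩
      · intro w hw
        rcases Finset.mem_insert.mp hw with rfl | hw
        · rw [hcx]
        · exact le_trans (by omega) (hTcol w hw)
      · intro j hj
        by_cases hje : j = jt
        · exact ⟨x, Finset.mem_insert_self x T, by rw [hcx, hje]⟩
        · have : t + 1 ≤ (j : ℕ) := by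
            rcases lt_or_eq_of_le hj with hh | hh
            · omega
            · exact absurd (Fin.ext hh.symm) hje
          obtain ⟨w, hwT, hwc⟩ := hTsurj j this
          exact ⟨w, Finset.mem_insert_of_mem hwT, hwc⟩
  obtain ⟨T, hTclique, _, hTsurj⟩ := key k 0 (by omega)
  refine ⟨T, (SimpleGraph.isClique_iff H).mpr hTclique, ?_⟩
  have hcard : (Finset.univ : Finset (Fin k)).card ≤ T.card := by
    refine Finset.card_le_card_of_injOn (fun j => (hTsurj j (by omega)).choose)
      (fun j _ => (hTsurj j (by omega)).choose_spec.1) ?_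
    intro a _ b _ hab
    have ha := (hTsurj a (by omega)).choose_spec.2
    have hb := (hTsurj b (by omega)).choose_spec.2
    simp only at hab
    rw [← ha, ← hb, hab]
  simpa using hcard


lemma grundySet_bddAbove {W : Type*} [Fintype W] (H : SimpleGraph W) :
    BddAbove {k | ∃ c : W → Fin k, IsProperColoring H c ∧ IsPseudoGrundyColoring H c} := by
  refine ⟨Fintype.card W, fun k hk => ?_⟩
  obtain ⟨c, _, hsurj, _⟩ := hk
  simpa using Fintype.card_le_of_surjective c hsurj

lemma hadwigerSet_bddAbove {W : Type*} [Fintype W] (H : SimpleGraph W) :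
    BddAbove {k | HasCompleteMinor H k} := by
  refine ⟨Fintype.card W, fun k hk => ?_⟩
  obtain ⟨B, hconn, hdisj, _⟩ := hk
  have hne : ∀ i : Fin k, ∃ w, w ∈ B i := by
    intro i
    obtain ⟨⟨a, ha⟩⟩ := (hconn i).nonempty
    exact ⟨a, ha⟩
  choose f hf using hne
  have hinj : Function.Injective f := by
    intro i j hij
    by_contra hne'
    exact Set.disjoint_left.mp (hdisj i j hne') (hf i) (hij ▸ hf j)
  simpa using Fintype.card_le_of_injective f hinj


lemma p4_core {V : Type*} [Fintype V] (G : SimpleGraph V) (w x y z : V)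
    (hwx : G.Adj w x) (hxy : G.Adj x y) (hyz : G.Adj y z)
    (hwy : ¬G.Adj w y) (hwz : ¬G.Adj w z) (hxz : ¬G.Adj x z)
    (heq : grundyNumber (G.induce {w, x, y, z}) = hadwigerNumber (G.induce {w, x, y, z})) :
    False := by
  classical
  have hwxne : w ≠ x := hwx.ne
  have hxyne : x ≠ y := hxy.ne
  have hyzne : y ≠ z := hyz.ne
  have hwyne : w ≠ y := fun h => hwz (h ▸ hyz)
  have hwzne : w ≠ z := fun h => hwy (by rw [h]; exact hyz.symm)
  have hxzne : x ≠ z := fun h => hwz (by rw [← h]; exact hwx)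
  have hxw : x ≠ w := fun h => hwxne h.symm
  have hyx : y ≠ x := fun h => hxyne h.symm
  have hzy : z ≠ y := fun h => hyzne h.symm
  have hyw' : y ≠ w := fun h => hwyne h.symm
  have hzw' : z ≠ w := fun h => hwzne h.symm
  have hzx' : z ≠ x := fun h => hxzne h.symm
  have hyw : ¬G.Adj y w := fun h => hwy h.symm
  have hzw : ¬G.Adj z w := fun h => hwz h.symm
  have hzx : ¬G.Adj z x := fun h => hxz h.symm
  set t : Set V := {w, x, y, z} with ht
  letI : Fintype ↑t := Set.Finite.fintype (Set.toFinite t)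
  have hw : w ∈ t := by simp [ht]
  have hx : x ∈ t := by simp [ht]
  have hy : y ∈ t := by simp [ht]
  have hz : z ∈ t := by simp [ht]
  set w' : ↑t := ⟨w, hw⟩ with hw'
  set x' : ↑t := ⟨x, hx⟩ with hx'
  set y' : ↑t := ⟨y, hy⟩ with hy'
  set z' : ↑t := ⟨z, hz⟩ with hz'
  have hcases : ∀ a : ↑t, a = w' ∨ a = x' ∨ a = y' ∨ a = z' := by
    rintro ⟨a, ha⟩
    rw [ht] at ha
    simp only [Set.mem_insert_iff, Set.mem_singleton_iff] at ha
    rcases ha with rfl | rfl | rfl | rfl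
    · exact Or.inl rfl
    · exact Or.inr (Or.inl rfl)
    · exact Or.inr (Or.inr (Or.inl rfl))
    · exact Or.inr (Or.inr (Or.inr rfl))
  -- Grundy number at least 3
  have h3 : 3 ≤ grundyNumber (G.induce t) := by
    unfold grundyNumber
    refine le_csSup (grundySet_bddAbove _) ?_
    refine ⟨fun v => if (v : V) = x then 2 else if (v : V) = y then 1 else 0, ?_, ?_, ?_⟩
    · -- proper
      intro a b hab hco
      have hab' : G.Adj (a : V) (b : V) := hab
      rcases hcases a with rfl | rfl | rfl | rfl <;>
        rcases hcases b with rfl | rfl | rfl | rfl <;>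
        simp_all [hw', hx', hy', hz']
    · -- surjective
      intro m
      fin_cases m
      · exact ⟨w', by simp [hw', hwxne, hwyne]⟩
      · exact ⟨y', by simp [hy', hxyne.symm]⟩
      · exact ⟨x', by simp [hx']⟩
    · -- pseudo-grundy
      intro v j hj
      rcases hcases v with rfl | rfl | rfl | rfl
      · simp only [hw', if_neg hwxne, if_neg hwyne] at hj
        exact absurd hj (by simp)
      · simp only [hx', if_pos rfl] at hj
        have hj2 : (j : ℕ) < 2 := hj
        interval_cases hji : (j : ℕ)
        · refine ⟨w', hwx.symm, ?_⟩
          simp only [hw', if_neg hwxne, if_neg hwyne]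
          exact (Fin.ext hji.symm : (0 : Fin 3) = j)
        · refine ⟨y', hxy, ?_⟩
          simp only [hy', if_neg hxyne.symm, if_pos rfl]
          exact (Fin.ext hji.symm : (1 : Fin 3) = j)
      · simp only [hy', if_neg hxyne.symm, if_pos rfl] at hj
        have hj1 : (j : ℕ) < 1 := hj
        refine ⟨z', hyz, ?_⟩
        simp only [hz', if_neg hxzne.symm, if_neg hyzne.symm]
        exact (Fin.ext (by omega) : (0 : Fin 3) = j)
      · simp only [hz', if_neg hxzne.symm, if_neg hyzne.symm] at hj
        exact absurd hj (by simp)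
  have hhad3 : 3 ≤ hadwigerNumber (G.induce t) := heq ▸ h3
  have hmem : HasCompleteMinor (G.induce t) (hadwigerNumber (G.induce t)) := by
    have h0 : HasCompleteMinor (G.induce t) 0 :=
      ⟨fun i => i.elim0, fun i => i.elim0, fun i j => j.elim0, fun i j => j.elim0⟩
    have hmm := Nat.sSup_mem (s := {k | HasCompleteMinor (G.induce t) k}) ⟨0, h0⟩
      (hadwigerSet_bddAbove _)
    exact hmm
  set k : ℕ := hadwigerNumber (G.induce t) with hk
  obtain ⟨B, hconn, hdisj, hadjB⟩ := hmem
  set i0 : Fin k := ⟨0, by omega⟩ with hi0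
  set i1 : Fin k := ⟨1, by omega⟩ with hi1
  set i2 : Fin k := ⟨2, by omega⟩ with hi2
  have hne01 : i0 ≠ i1 := by simp [hi0, hi1, Fin.ext_iff]
  have hne02 : i0 ≠ i2 := by simp [hi0, hi2, Fin.ext_iff]
  have hne12 : i1 ≠ i2 := by simp [hi1, hi2, Fin.ext_iff]
  have hcard4 : Fintype.card ↑t ≤ 4 := by
    have hsub : t.toFinset ⊆ ({w, x, y, z} : Finset V) := by
      intro a ha
      rw [Set.mem_toFinset, ht] at ha
      simpa using ha
    have h4 : ({w, x, y, z} : Finset V).card ≤ 4 := by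
      refine (Finset.card_insert_le _ _).trans (Nat.succ_le_succ ?_)
      refine (Finset.card_insert_le _ _).trans (Nat.succ_le_succ ?_)
      refine (Finset.card_insert_le _ _).trans (Nat.succ_le_succ ?_)
      simp
    calc Fintype.card ↑t = t.toFinset.card := (Set.toFinset_card t).symm
      _ ≤ _ := Finset.card_le_card hsub
      _ ≤ 4 := h4
  have hdisj' : ∀ (p q : Fin k), p ≠ q → ∀ a ∈ B p, ∀ b ∈ B q, a ≠ b := by
    intro p q hpq a hap b hbq hab
    exact Set.disjoint_left.mp (hdisj p q hpq) hap (hab ▸ hbq)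
  -- two branch sets with two elements each is impossible
  have htwo : ∀ (i j l : Fin k), i ≠ j → l ≠ i → l ≠ j →
      ∀ b1 ∈ B i, ∀ b2 ∈ B i, b1 ≠ b2 → ∀ d1 ∈ B j, ∀ d2 ∈ B j, d1 ≠ d2 → False := by
    intro i j l hij hli hlj b1 hb1 b2 hb2 hb d1 hd1 d2 hd2 hd
    obtain ⟨⟨f0, hf0⟩⟩ := (hconn l).nonempty
    have n13 : b1 ≠ d1 := hdisj' i j hij b1 hb1 d1 hd1
    have n14 : b1 ≠ d2 := hdisj' i j hij b1 hb1 d2 hd2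
    have n23 : b2 ≠ d1 := hdisj' i j hij b2 hb2 d1 hd1
    have n24 : b2 ≠ d2 := hdisj' i j hij b2 hb2 d2 hd2
    have n15 : b1 ≠ f0 := hdisj' i l hli.symm b1 hb1 f0 hf0
    have n25 : b2 ≠ f0 := hdisj' i l hli.symm b2 hb2 f0 hf0
    have n35 : d1 ≠ f0 := hdisj' j l hlj.symm d1 hd1 f0 hf0
    have n45 : d2 ≠ f0 := hdisj' j l hlj.symm d2 hd2 f0 hf0
    have hc5 : ({b1, b2, d1, d2, f0} : Finset ↑t).card = 5 := by
      rw [Finset.card_insert_of_notMem (by simp [hb, n13, n14, n15]),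
        Finset.card_insert_of_notMem (by simp [n23, n24, n25]),
        Finset.card_insert_of_notMem (by simp [hd, n35]),
        Finset.card_insert_of_notMem (by simp [n45]), Finset.card_singleton]
    have hle := Finset.card_le_card (Finset.subset_univ ({b1, b2, d1, d2, f0} : Finset ↑t))
    rw [hc5, Finset.card_univ] at hle
    omega
  -- the final adjacency analysis
  have hfinal : ∀ u v : ↑t, G.Adj (u : V) (v : V) → ∀ l : Fin k,
      u ∉ B l → v ∉ B l → ((G.induce t).induce (B l)).Connected →
      (∃ p ∈ B l, G.Adj (p : V) (u : V)) → (∃ q ∈ B l, G.Adj (q : V) (v : V)) → False := by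
    intro u v huv l hul hvl hconnl hpu hpv
    obtain ⟨p, hpB, hpadj⟩ := hpu
    obtain ⟨q, hqB, hqadj⟩ := hpv
    -- the "edgeless" contradiction, used in the middle case
    have hbotcase : ∀ a b : ↑t, a ∈ B l → b ∈ B l →
        (∀ r : ↑t, r ∈ B l → r = w' ∨ r = z') → a = b := by
      intro a b haB hbB hr
      have hbot : ((G.induce t).induce (B l)) = ⊥ := by
        ext c d
        simp only [comap_adj, Function.Embedding.coe_subtype, bot_adj, iff_false]
        intro hcd
        have hcd' : G.Adj ((c : ↑t) : V) ((d : ↑t) : V) := hcd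
        rcases hr c c.2 with rfl2 | rfl2 <;> rcases hr d d.2 with rfl3 | rfl3 <;>
          rw [rfl2, rfl3] at hcd' <;>
          simp only [hw', hz'] at hcd'
        · exact G.irrefl hcd'
        · exact hwz hcd'
        · exact hzw hcd'
        · exact G.irrefl hcd'
      have hreach := hconnl.preconnected ⟨a, haB⟩ ⟨b, hbB⟩
      rw [hbot, reachable_bot] at hreach
      exact congrArg Subtype.val hreach
    rcases hcases u with rfl | rfl | rfl | rfl <;> rcases hcases v with rfl | rfl | rfl | rfl
    -- u = w'
    · exact G.irrefl huv
    · -- (w', x') : p adjacent to w, p ∈ {y', z'} : impossible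
      rcases hcases p with rfl | rfl | rfl | rfl
      · exact hul hpB
      · exact hvl hpB
      · exact hyw hpadj
      · exact hzw hpadj
    · exact hwy huv
    · exact hwz huv
    -- u = x'
    · -- (x', w') : q adjacent to w
      rcases hcases q with rfl | rfl | rfl | rfl
      · exact hvl hqB
      · exact hul hqB
      · exact hyw hqadj
      · exact hzw hqadj
    · exact G.irrefl huv
    · -- (x', y') : p = w', q = z', connectivity contradiction
      have hp : p = w' := by
        rcases hcases p with rfl | rfl | rfl | rfl
        · rfl
        · exact absurd hpB hul
        · exact absurd hpB hvl
        · exact absurd hpadj hzx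
      have hq : q = z' := by
        rcases hcases q with rfl | rfl | rfl | rfl
        · exact absurd hqadj hwy
        · exact absurd hqB hul
        · exact absurd hqB hvl
        · rfl
      have hr : ∀ r : ↑t, r ∈ B l → r = w' ∨ r = z' := by
        intro r hrB
        rcases hcases r with rfl | rfl | rfl | rfl
        · exact Or.inl rfl
        · exact absurd hrB hul
        · exact absurd hrB hvl
        · exact Or.inr rfl
      have := hbotcase p q hpB hqB hr
      rw [hp, hq] at this
      exact hwzne (congrArg Subtype.val this)
    · exact hxz huv
    -- u = y'
    · exact hyw huv
    · -- (y', x') : q = w', p = z'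
      have hq : q = w' := by
        rcases hcases q with rfl | rfl | rfl | rfl
        · rfl
        · exact absurd hqB hvl
        · exact absurd hqB hul
        · exact absurd hqadj hzx
      have hp : p = z' := by
        rcases hcases p with rfl | rfl | rfl | rfl
        · exact absurd hpadj hwy
        · exact absurd hpB hvl
        · exact absurd hpB hul
        · rfl
      have hr : ∀ r : ↑t, r ∈ B l → r = w' ∨ r = z' := by
        intro r hrB
        rcases hcases r with rfl | rfl | rfl | rfl
        · exact Or.inl rfl
        · exact absurd hrB hvl
        · exact absurd hrB hul
        · exact Or.inr rfl
      have := hbotcase q p hqB hpB hr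
      rw [hp, hq] at this
      exact hwzne (congrArg Subtype.val this)
    · exact G.irrefl huv
    · -- (y', z') : q adjacent to z, q ∈ {w', x'} : impossible
      rcases hcases q with rfl | rfl | rfl | rfl
      · exact hwz hqadj
      · exact hxz hqadj
      · exact hul hqB
      · exact hvl hqB
    -- u = z'
    · exact hzw huv
    · exact hzx huv
    · -- (z', y') : p adjacent to z
      rcases hcases p with rfl | rfl | rfl | rfl
      · exact hwz hpadj
      · exact hxz hpadj
      · exact hvl hpB
      · exact hul hpB
    · exact G.irrefl huv
  -- singleton analysis
  have hSing : ∀ i : Fin k, (∀ b ∈ B i, ∀ b' ∈ B i, b = b') → ∀ a ∈ B i, ∀ b ∈ B i, b = a := by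
    intro i hi a ha b hb
    exact hi b hb a ha
  obtain ⟨⟨a0, ha0⟩⟩ := (hconn i0).nonempty
  obtain ⟨⟨a1, ha1⟩⟩ := (hconn i1).nonempty
  obtain ⟨⟨a2, ha2⟩⟩ := (hconn i2).nonempty
  -- helper to launch hfinal given two singleton branch sets and a third one
  have hrun : ∀ (i j l : Fin k), i ≠ j → l ≠ i → l ≠ j →
      ∀ a ∈ B i, (∀ b ∈ B i, b = a) → ∀ c ∈ B j, (∀ b ∈ B j, b = c) → False := by
    intro i j l hij hli hlj a haB haS c hcB hcS
    obtain ⟨u1, hu1, v1, hv1, hadj1⟩ := hadjB i j hij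
    rw [haS u1 hu1, hcS v1 hv1] at hadj1
    have huv : G.Adj (a : V) (c : V) := hadj1
    have hul : a ∉ B l := fun hh => hdisj' i l hli.symm a haB a hh rfl
    have hvl : c ∉ B l := fun hh => hdisj' j l hlj.symm c hcB c hh rfl
    obtain ⟨u2, hu2, p2, hp2, hadj2⟩ := hadjB i l (fun hh => hli (hh.symm))
    rw [haS u2 hu2] at hadj2
    obtain ⟨v3, hv3, q3, hq3, hadj3⟩ := hadjB j l (fun hh => hlj (hh.symm))
    rw [hcS v3 hv3] at hadj3
    exact hfinal a c huv l hul hvl (hconn l)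
      ⟨p2, hp2, (show G.Adj (a : V) (p2 : V) from hadj2).symm⟩
      ⟨q3, hq3, (show G.Adj (c : V) (q3 : V) from hadj3).symm⟩
  by_cases s0 : ∀ b ∈ B i0, ∀ b' ∈ B i0, b = b'
  · by_cases s1 : ∀ b ∈ B i1, ∀ b' ∈ B i1, b = b'
    · exact hrun i0 i1 i2 hne01 hne02.symm hne12.symm a0 ha0 (hSing i0 s0 a0 ha0)
        a1 ha1 (hSing i1 s1 a1 ha1)
    · push_neg at s1
      obtain ⟨b1', hb1', b2', hb2', hbne⟩ := s1
      by_cases s2 : ∀ b ∈ B i2, ∀ b' ∈ B i2, b = b'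
      · exact hrun i0 i2 i1 hne02 hne01.symm hne12 a0 ha0 (hSing i0 s0 a0 ha0)
          a2 ha2 (hSing i2 s2 a2 ha2)
      · push_neg at s2
        obtain ⟨d1', hd1', d2', hd2', hdne⟩ := s2
        exact htwo i1 i2 i0 hne12 hne01 hne02 b1' hb1' b2' hb2' hbne d1' hd1' d2' hd2' hdne
  · push_neg at s0
    obtain ⟨b1', hb1', b2', hb2', hbne⟩ := s0
    have s1 : ∀ b ∈ B i1, ∀ b' ∈ B i1, b = b' := by
      by_contra s1
      push_neg at s1
      obtain ⟨d1', hd1', d2', hd2', hdne⟩ := s1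
      exact htwo i0 i1 i2 hne01 hne02.symm hne12.symm b1' hb1' b2' hb2' hbne d1' hd1' d2' hd2' hdne
    have s2 : ∀ b ∈ B i2, ∀ b' ∈ B i2, b = b' := by
      by_contra s2
      push_neg at s2
      obtain ⟨d1', hd1', d2', hd2', hdne⟩ := s2
      exact htwo i0 i2 i1 hne02 hne01.symm hne12 b1' hb1' b2' hb2' hbne d1' hd1' d2' hd2' hdne
    exact hrun i1 i2 i0 hne12 hne01 hne02 a1 ha1 (hSing i1 s1 a1 ha1)
      a2 ha2 (hSing i2 s2 a2 ha2)

/-- Every Γh-perfect graph is perfect. -/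
theorem grundy_hadwiger_perfect_is_perfect {V : Type*} [Fintype V] (G : SimpleGraph V)
    (h : ∀ s : Set V, grundyNumber (G.induce s) = hadwigerNumber (G.induce s)) :
    ∀ s : Set V, (G.induce s).chromaticNumber = ((G.induce s).cliqueNum : ℕ∞) := by
  classical
  intro s
  letI : Fintype ↑s := Set.Finite.fintype (Set.toFinite s)
  have hnp : NoP4 (G.induce s) := by
    intro p q r u hpq hqr hru hnpr hnpu hnqu
    exact p4_core G (p : V) (q : V) (r : V) (u : V) hpq hqr hru
      (fun hh => hnpr hh) (fun hh => hnpu hh) (fun hh => hnqu hh) (h _)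
  obtain ⟨k, c, hprop, hg⟩ := exists_grundy (G.induce s)
  obtain ⟨T, hT, hkT⟩ := clique_of_grundy hnp hprop hg
  have hχk : (G.induce s).chromaticNumber ≤ (k : ℕ∞) := by
    have hcol : (G.induce s).Colorable k :=
      ⟨SimpleGraph.Coloring.mk c (fun {u v} hadj => hprop u v hadj)⟩
    exact hcol.chromaticNumber_le
  have hkω : k ≤ (G.induce s).cliqueNum :=
    le_trans hkT (SimpleGraph.IsClique.card_le_cliqueNum (tc := hT))
  have hωχ : (((G.induce s).cliqueNum : ℕ) : ℕ∞) ≤ (G.induce s).chromaticNumber := by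
    obtain ⟨T', hT'⟩ := SimpleGraph.exists_isNClique_cliqueNum (G := G.induce s)
    have hcc := (hT'.isClique).card_le_chromaticNumber
    rwa [hT'.card_eq] at hcc
  exact le_antisymm (le_trans hχk (by exact_mod_cast hkω)) hωχ
end
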